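/- Let p : Ω → Λ be a universal covering of k-graphs, x a vertex of Λ, v a vertex of Ω with p(v) = x, and H a subgroup of π(Λ,x). Let H act on (Ω,p) by covering automorphisms via the canonical action (for λ ∈ Ω and c ∈ H, λc is the unique element of Ω with p(λc) = p(λ) and s(λc) = acv, where a ∈ 𝒢(Λ) satisfies s(λ) = av). Then this action is free, the associated covering q : Ω/H → Λ (λH ↦ p(λ)) is connected, and H = q_*π(Ω/H, vH). Moreover, every connected covering of Λ is isomorphic to one of the coverings Ω/H → Λ for some subgroup H of π(Λ,x). -/

import Mathlib

/-!
Arrows-only formalization of `k`-graphs (higher-rank graphs), their coverings,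
fundamental groupoids, and groupoid actions, following Pask–Quigg–Raeburn,
"Coverings of k-graphs".

A small category is encoded by its set of arrows `A` together with
source/range maps `src rng : A → A` (whose common image is the set of
identities = vertices) and a (guarded) total composition `comp : A → A → A`,
where `comp f g` is the composite "f after g", meaningful when `src f = rng g`.
A `k`-graph additionally has a degree map `deg : A → (Fin k → ℕ)` which is
functorial and satisfies the unique factorization property.
-/

namespace KGraphCovering

/-- A `k`-graph in arrows-only form. -/
structure KGraphStruct (k : ℕ) (A : Type) : Type where
  src : A → A
  rng : A → A
  comp : A → A → A
  deg : A → (Fin k → ℕ)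
  src_src : ∀ f, src (src f) = src f
  rng_src : ∀ f, rng (src f) = src f
  src_rng : ∀ f, src (rng f) = rng f
  rng_rng : ∀ f, rng (rng f) = rng f
  comp_src_id : ∀ f, comp f (src f) = f
  rng_comp_id : ∀ f, comp (rng f) f = f
  src_comp : ∀ f g, src f = rng g → src (comp f g) = src g
  rng_comp : ∀ f g, src f = rng g → rng (comp f g) = rng f
  assoc : ∀ f g h, src f = rng g → src g = rng h →
    comp (comp f g) h = comp f (comp g h)
  deg_comp : ∀ f g, src f = rng g → deg (comp f g) = deg f + deg g
  deg_src : ∀ f, deg (src f) = 0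
  factor : ∀ f m n, deg f = m + n →
    ∃! q : A × A, src q.1 = rng q.2 ∧ deg q.1 = m ∧ deg q.2 = n ∧ comp q.1 q.2 = f

namespace KGraphStruct

variable {k : ℕ} {A : Type}

/-- The vertices (objects) are the identity arrows. -/
def IsVertex (S : KGraphStruct k A) (v : A) : Prop := S.src v = v

/-- A `k`-graph is connected if the equivalence relation generated by
"there is a morphism from `v` to `u`" relates all pairs of vertices. -/
def Connected (S : KGraphStruct k A) : Prop :=
  ∀ u v, S.IsVertex u → S.IsVertex v →
    Relation.EqvGen (fun a b => ∃ f, S.rng f = a ∧ S.src f = b) u v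

end KGraphStruct

/-- A groupoid in arrows-only form. -/
structure GroupoidStruct (B : Type) : Type where
  src : B → B
  rng : B → B
  comp : B → B → B
  inv : B → B
  src_src : ∀ f, src (src f) = src f
  rng_src : ∀ f, rng (src f) = src f
  src_rng : ∀ f, src (rng f) = rng f
  rng_rng : ∀ f, rng (rng f) = rng f
  comp_src_id : ∀ f, comp f (src f) = f
  rng_comp_id : ∀ f, comp (rng f) f = f
  src_comp : ∀ f g, src f = rng g → src (comp f g) = src g
  rng_comp : ∀ f g, src f = rng g → rng (comp f g) = rng f
  assoc : ∀ f g h, src f = rng g → src g = rng h →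
    comp (comp f g) h = comp f (comp g h)
  src_inv : ∀ f, src (inv f) = rng f
  rng_inv : ∀ f, rng (inv f) = src f
  inv_comp_self : ∀ f, comp (inv f) f = src f
  comp_inv_self : ∀ f, comp f (inv f) = rng f

namespace GroupoidStruct

variable {B : Type}

/-- The vertices (objects) of a groupoid are the identity arrows. -/
def IsVertex (G : GroupoidStruct B) (v : B) : Prop := G.src v = v

/-- A subgroup of the isotropy group `x𝒢x`, as a set of arrows. -/
def IsSubgroupAt (G : GroupoidStruct B) (x : B) (H : Set B) : Prop :=
  (∀ a ∈ H, G.src a = x ∧ G.rng a = x) ∧ x ∈ H ∧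
  (∀ a ∈ H, ∀ b ∈ H, G.comp a b ∈ H) ∧ (∀ a ∈ H, G.inv a ∈ H)

/-- `K` is a conjugate of `H` in the isotropy group at `x`. -/
def ConjAt (G : GroupoidStruct B) (x : B) (H K : Set B) : Prop :=
  ∃ g, G.src g = x ∧ G.rng g = x ∧
    K = (fun a => G.comp (G.comp g a) (G.inv g)) '' H

/-- `H` is a normal subset of the isotropy group at `x`. -/
def IsNormalAt (G : GroupoidStruct B) (x : B) (H : Set B) : Prop :=
  ∀ g, G.src g = x → G.rng g = x → ∀ a ∈ H, G.comp (G.comp g a) (G.inv g) ∈ H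

/-- The normalizer of `H` in the isotropy group at `x`. -/
def normalizerAt (G : GroupoidStruct B) (x : B) (H : Set B) : Set B :=
  {g | G.src g = x ∧ G.rng g = x ∧
    (fun a => G.comp (G.comp g a) (G.inv g)) '' H = H}

end GroupoidStruct


/-- `f` is a morphism of `k`-graphs (a degree-preserving functor). -/
def IsKGraphHomFun {k : ℕ} {A A' : Type} (S : KGraphStruct k A)
    (T : KGraphStruct k A') (f : A → A') : Prop :=
  (∀ a, f (S.src a) = T.src (f a)) ∧
  (∀ a, f (S.rng a) = T.rng (f a)) ∧
  (∀ a b, S.src a = S.rng b → f (S.comp a b) = T.comp (f a) (f b)) ∧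
  (∀ a, T.deg (f a) = S.deg a)

/-- `f` is a functor from a `k`-graph to a groupoid. -/
def IsFunctorToGpdFun {k : ℕ} {A B : Type} (S : KGraphStruct k A)
    (G : GroupoidStruct B) (f : A → B) : Prop :=
  (∀ a, f (S.src a) = G.src (f a)) ∧
  (∀ a, f (S.rng a) = G.rng (f a)) ∧
  (∀ a b, S.src a = S.rng b → f (S.comp a b) = G.comp (f a) (f b))

/-- `f` is a morphism of groupoids (a functor). -/
def IsGpdHomFun {B C : Type} (G : GroupoidStruct B) (H : GroupoidStruct C)
    (f : B → C) : Prop :=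
  (∀ a, f (G.src a) = H.src (f a)) ∧
  (∀ a, f (G.rng a) = H.rng (f a)) ∧
  (∀ a b, G.src a = G.rng b → f (G.comp a b) = H.comp (f a) (f b))

/-- `p : Ω → Λ` is a covering of `k`-graphs: a surjective `k`-graph morphism
which maps `Ωv` bijectively onto `Λp(v)` and `vΩ` bijectively onto `p(v)Λ`
for every vertex `v` of `Ω`. -/
structure IsCovering {k : ℕ} {A A' : Type} (S : KGraphStruct k A')
    (T : KGraphStruct k A) (p : A' → A) : Prop where
  hom : IsKGraphHomFun S T p
  surj : Function.Surjective p
  src_inj : ∀ a b, S.src a = S.src b → p a = p b → a = b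
  src_lift : ∀ v, S.IsVertex v → ∀ g, T.src g = p v → ∃ a, S.src a = v ∧ p a = g
  rng_inj : ∀ a b, S.rng a = S.rng b → p a = p b → a = b
  rng_lift : ∀ v, S.IsVertex v → ∀ g, T.rng g = p v → ∃ a, S.rng a = v ∧ p a = g

/-- A fundamental groupoid of a `k`-graph `S`: a groupoid `G` whose object
set is identified with the vertex set of `S` via the canonical functor `i`
(which is bijective on objects), with the universal property that every
functor from `S` to a groupoid factors uniquely through `i`. -/
structure FundamentalGroupoid {k : ℕ} {A : Type} (S : KGraphStruct k A) :
    Type 1 where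
  B : Type
  G : GroupoidStruct B
  i : A → B
  i_hom : IsFunctorToGpdFun S G i
  obj_bij : ∀ w, G.IsVertex w → ∃! v, S.IsVertex v ∧ i v = w
  univ : ∀ {C : Type} (H : GroupoidStruct C) (F : A → C),
    IsFunctorToGpdFun S H F →
    ∃! F' : B → C, IsGpdHomFun G H F' ∧ ∀ a, F' (i a) = F a

/-- The fundamental group `π(Λ,x)` at a vertex `x`, as the isotropy of the
fundamental groupoid at `i x`. -/
def FundamentalGroupoid.pi1 {k : ℕ} {A : Type} {S : KGraphStruct k A}
    (F : FundamentalGroupoid S) (x : A) : Set F.B :=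
  {a | F.G.src a = F.i x ∧ F.G.rng a = F.i x}

/-- An automorphism of the covering `p : Ω → Λ`. -/
def IsCoveringAut {k : ℕ} {A A' : Type} (Ω : KGraphStruct k A')
    (Λ : KGraphStruct k A) (p : A' → A) (φ : A' → A') : Prop :=
  Function.Bijective φ ∧ IsKGraphHomFun Ω Ω φ ∧ ∀ a, p (φ a) = p a

/-- The action of the fundamental groupoid `F = 𝒢(Λ)` on the vertex set of a
covering `p : Ω → Λ`, determined by `i(p(λ)) ⬝ s(λ) = r(λ)`.  The fiber of a
vertex `w` of `Ω` is over the object `F.i (p w)`. -/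
structure CorrespondingAction {k : ℕ} {A A' : Type} (Ω : KGraphStruct k A')
    (Λ : KGraphStruct k A) (F : FundamentalGroupoid Λ) (p : A' → A)
    (act : F.B → A' → A') : Prop where
  act_vertex : ∀ a w, Ω.IsVertex w → F.G.src a = F.i (p w) →
    Ω.IsVertex (act a w) ∧ F.i (p (act a w)) = F.G.rng a
  act_id : ∀ w, Ω.IsVertex w → act (F.i (p w)) w = w
  act_comp : ∀ a b w, Ω.IsVertex w → F.G.src b = F.i (p w) →
    F.G.src a = F.G.rng b → act (F.G.comp a b) w = act a (act b w)
  act_cov : ∀ lam, act (F.i (p lam)) (Ω.src lam) = Ω.rng lam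

/-- An action of a groupoid `G` on a set `V`, presented by an anchor map
`fib : V → B` (landing in vertices) and a guarded action map. -/
structure GpdActionStruct {B : Type} (G : GroupoidStruct B) (V : Type) :
    Type where
  fib : V → B
  act : B → V → V
  fib_vertex : ∀ v, G.src (fib v) = fib v
  act_fib : ∀ a v, G.src a = fib v → fib (act a v) = G.rng a
  act_id : ∀ v, act (fib v) v = v
  act_comp : ∀ a b v, G.src b = fib v → G.src a = G.rng b →
    act (G.comp a b) v = act a (act b v)

namespace GpdActionStruct

variable {B V W : Type} {G : GroupoidStruct B}

/-- Transitivity of a groupoid action. -/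
def Transitive (ρ : GpdActionStruct G V) : Prop :=
  ∀ u v : V, ∃ a, G.src a = ρ.fib v ∧ ρ.act a v = u

/-- The stability group of the action at `v`. -/
def stab (ρ : GpdActionStruct G V) (v : V) : Set B :=
  {a | G.src a = ρ.fib v ∧ G.rng a = ρ.fib v ∧ ρ.act a v = v}

/-- Freeness of a groupoid action: all stability groups are trivial. -/
def Free (ρ : GpdActionStruct G V) : Prop :=
  ∀ (v : V) (a : B), a ∈ ρ.stab v → a = ρ.fib v

end GpdActionStruct

/-- A morphism of actions of the groupoid `G`: a fiber-preserving
equivariant map. -/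
def IsActionHom {B V W : Type} {G : GroupoidStruct B}
    (ρ : GpdActionStruct G V) (σ : GpdActionStruct G W) (φ : V → W) : Prop :=
  (∀ v, σ.fib (φ v) = ρ.fib v) ∧
  ∀ a v, G.src a = ρ.fib v → φ (ρ.act a v) = σ.act a (φ v)

/-- An automorphism of an action of the groupoid `G`. -/
def IsActionAut {B V : Type} {G : GroupoidStruct B}
    (ρ : GpdActionStruct G V) (φ : V → V) : Prop :=
  Function.Bijective φ ∧ IsActionHom ρ ρ φ

/-- A universal covering: a connected covering admitting a morphism of
coverings to every connected covering of the base. -/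
def IsUniversalCovering {k : ℕ} {A A' : Type} (Ω : KGraphStruct k A')
    (Λ : KGraphStruct k A) (p : A' → A) : Prop :=
  IsCovering Ω Λ p ∧ Ω.Connected ∧
  ∀ (A'' : Type) (Sg : KGraphStruct k A'') (q : A'' → A),
    IsCovering Sg Λ q → Sg.Connected →
    ∃ φ : A' → A'', IsKGraphHomFun Ω Sg φ ∧ ∀ a, q (φ a) = p a

end KGraphCovering

namespace KGraphCovering

/-! ### Auxiliary lemmas -/

namespace GroupoidStruct

variable {B : Type} (G : GroupoidStruct B)

theorem inv_unique {c d : B} (h1 : G.src c = G.rng d) (h2 : G.comp c d = G.rng c) :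
    G.inv c = d := by
  have e1 : G.inv c = G.comp (G.inv c) (G.comp c d) := by
    rw [h2, ← G.src_inv c, G.comp_src_id]
  rw [e1, ← G.assoc _ _ _ (G.src_inv c) h1, G.inv_comp_self, h1, G.rng_comp_id]

theorem comp_id_left {c d : B} (h : G.rng c = d) : G.comp d c = c := by
  rw [← h, G.rng_comp_id]

theorem comp_id_right {c d : B} (h : G.src c = d) : G.comp c d = c := by
  rw [← h, G.comp_src_id]

theorem comp_inv_comp {c d : B} (h : G.src c = G.rng d) :
    G.comp (G.inv c) (G.comp c d) = d := by
  rw [← G.assoc _ _ _ (G.src_inv c) h, G.inv_comp_self, h, G.rng_comp_id]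

theorem comp_comp_inv {c d : B} (h : G.rng c = G.rng d) :
    G.comp c (G.comp (G.inv c) d) = d := by
  rw [← G.assoc c (G.inv c) d (G.rng_inv c).symm (by rw [G.src_inv, h]),
    G.comp_inv_self, h, G.rng_comp_id]

theorem comp_left_cancel {c d d' : B} (h1 : G.src c = G.rng d) (h2 : G.src c = G.rng d')
    (h : G.comp c d = G.comp c d') : d = d' := by
  rw [← G.comp_inv_comp h1, h, G.comp_inv_comp h2]

theorem inv_inv (c : B) : G.inv (G.inv c) = c :=
  G.inv_unique (G.src_inv c) (by rw [G.inv_comp_self, G.rng_inv])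

theorem inv_comp {a b : B} (h : G.src a = G.rng b) :
    G.inv (G.comp a b) = G.comp (G.inv b) (G.inv a) := by
  have hb : G.src (G.inv b) = G.rng (G.inv a) := by rw [G.src_inv, G.rng_inv, h]
  refine G.inv_unique ?_ ?_
  · rw [G.src_comp _ _ h, G.rng_comp _ _ hb, G.rng_inv]
  · have e1 : G.comp b (G.comp (G.inv b) (G.inv a)) = G.inv a := by
      rw [← G.assoc b (G.inv b) (G.inv a) (G.rng_inv b).symm hb, G.comp_inv_self,
        ← h, ← G.rng_inv a, G.rng_comp_id]
    calc G.comp (G.comp a b) (G.comp (G.inv b) (G.inv a))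
        = G.comp a (G.comp b (G.comp (G.inv b) (G.inv a))) := by
          refine G.assoc _ _ _ h ?_
          rw [G.rng_comp _ _ hb, G.rng_inv]
      _ = G.comp a (G.inv a) := by rw [e1]
      _ = G.rng (G.comp a b) := by rw [G.comp_inv_self, G.rng_comp _ _ h]

end GroupoidStruct

namespace KGraphStruct

variable {k : ℕ} {A : Type} {S : KGraphStruct k A}

theorem IsVertex.rng_eq {u : A} (hu : S.IsVertex u) : S.rng u = u := by
  have h := S.rng_src u
  rw [hu] at h
  exact h

theorem isVertex_src (f : A) : S.IsVertex (S.src f) := S.src_src f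

theorem isVertex_rng (f : A) : S.IsVertex (S.rng f) := S.src_rng f

end KGraphStruct

theorem isGpdHomFun_comp {B C E : Type} {G : GroupoidStruct B} {H : GroupoidStruct C}
    {K : GroupoidStruct E} {f : B → C} {g : C → E} (hf : IsGpdHomFun G H f)
    (hg : IsGpdHomFun H K g) : IsGpdHomFun G K (g ∘ f) := by
  refine ⟨fun a => by simp only [Function.comp, hf.1, hg.1],
    fun a => by simp only [Function.comp, hf.2.1, hg.2.1], fun a b hab => ?_⟩
  simp only [Function.comp]
  rw [hf.2.2 a b hab, hg.2.2 _ _ (by rw [← hf.1, ← hf.2.1, hab])]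

theorem IsGpdHomFun.map_inv {B C : Type} {G : GroupoidStruct B} {H : GroupoidStruct C}
    {f : B → C} (hf : IsGpdHomFun G H f) (a : B) : f (G.inv a) = H.inv (f a) := by
  symm
  refine H.inv_unique ?_ ?_
  · rw [← hf.1, ← hf.2.1, G.rng_inv]
  · rw [← hf.2.2 a (G.inv a) (G.rng_inv a).symm, G.comp_inv_self, hf.2.1]

namespace FundamentalGroupoid

variable {k : ℕ} {A : Type} {S : KGraphStruct k A} (F : FundamentalGroupoid S)

theorem src_i_vertex {u : A} (hu : S.IsVertex u) : F.G.src (F.i u) = F.i u := by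
  rw [← F.i_hom.1, hu]

theorem rng_i_vertex {u : A} (hu : S.IsVertex u) : F.G.rng (F.i u) = F.i u := by
  rw [← F.i_hom.2.1, hu.rng_eq]

theorem i_inj {u u' : A} (hu : S.IsVertex u) (hu' : S.IsVertex u') (h : F.i u = F.i u') :
    u = u' := by
  obtain ⟨w, _, huniq⟩ := F.obj_bij (F.i u) (F.src_i_vertex hu)
  rw [huniq u ⟨hu, rfl⟩, huniq u' ⟨hu', h.symm⟩]

/-- The subset of the fundamental groupoid generated by the image of `i`. -/
inductive Gen : F.B → Prop
  | base (a : A) : Gen (F.i a)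
  | ginv {b : F.B} : Gen b → Gen (F.G.inv b)
  | gcomp {b c : F.B} : Gen b → Gen c → F.G.src b = F.G.rng c → Gen (F.G.comp b c)

theorem Gen.src {b : F.B} (h : F.Gen b) : F.Gen (F.G.src b) := by
  rw [← F.G.inv_comp_self b]; exact Gen.gcomp (Gen.ginv h) h (F.G.src_inv b)

theorem Gen.rng {b : F.B} (h : F.Gen b) : F.Gen (F.G.rng b) := by
  rw [← F.G.comp_inv_self b]; exact Gen.gcomp h (Gen.ginv h) (F.G.rng_inv b).symm

open Classical in
/-- Guarded composition on the generated subset. -/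
noncomputable def genComp (b c : {b : F.B // F.Gen b}) : {b : F.B // F.Gen b} :=
  if h : F.G.src b.1 = F.G.rng c.1 then ⟨F.G.comp b.1 c.1, b.2.gcomp c.2 h⟩ else b

theorem genComp_val {b c : {b : F.B // F.Gen b}} (h : F.G.src b.1 = F.G.rng c.1) :
    (F.genComp b c).1 = F.G.comp b.1 c.1 := by
  rw [genComp, dif_pos h]

/-- The subgroupoid generated by the image of `i`. -/
noncomputable def genGpd : GroupoidStruct {b : F.B // F.Gen b} where
  src b := ⟨F.G.src b.1, b.2.src⟩
  rng b := ⟨F.G.rng b.1, b.2.rng⟩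
  inv b := ⟨F.G.inv b.1, b.2.ginv⟩
  comp := F.genComp
  src_src f := Subtype.ext (F.G.src_src f.1)
  rng_src f := Subtype.ext (F.G.rng_src f.1)
  src_rng f := Subtype.ext (F.G.src_rng f.1)
  rng_rng f := Subtype.ext (F.G.rng_rng f.1)
  comp_src_id f := Subtype.ext <| by
    rw [F.genComp_val (F.G.rng_src f.1).symm]
    exact F.G.comp_src_id f.1
  rng_comp_id f := Subtype.ext <| by
    rw [F.genComp_val (F.G.src_rng f.1)]
    exact F.G.rng_comp_id f.1
  src_comp f g h := Subtype.ext <| by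
    have h1 : F.G.src f.1 = F.G.rng g.1 := congrArg Subtype.val h
    show F.G.src (F.genComp f g).1 = _
    rw [F.genComp_val h1]
    exact F.G.src_comp _ _ h1
  rng_comp f g h := Subtype.ext <| by
    have h1 : F.G.src f.1 = F.G.rng g.1 := congrArg Subtype.val h
    show F.G.rng (F.genComp f g).1 = _
    rw [F.genComp_val h1]
    exact F.G.rng_comp _ _ h1
  assoc f g h hfg hgh := Subtype.ext <| by
    have h1 : F.G.src f.1 = F.G.rng g.1 := congrArg Subtype.val hfg
    have h2 : F.G.src g.1 = F.G.rng h.1 := congrArg Subtype.val hgh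
    have h3 : F.G.src (F.genComp f g).1 = F.G.rng h.1 := by
      rw [F.genComp_val h1, F.G.src_comp _ _ h1, h2]
    have h4 : F.G.src f.1 = F.G.rng (F.genComp g h).1 := by
      rw [F.genComp_val h2, F.G.rng_comp _ _ h2, h1]
    rw [F.genComp_val h3, F.genComp_val h4, F.genComp_val h1, F.genComp_val h2]
    exact F.G.assoc f.1 g.1 h.1 h1 h2
  src_inv f := Subtype.ext (F.G.src_inv f.1)
  rng_inv f := Subtype.ext (F.G.rng_inv f.1)
  inv_comp_self f := Subtype.ext <| by
    rw [F.genComp_val (F.G.src_inv f.1)]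
    exact F.G.inv_comp_self f.1
  comp_inv_self f := Subtype.ext <| by
    rw [F.genComp_val (F.G.rng_inv f.1).symm]
    exact F.G.comp_inv_self f.1

theorem gen_all (b : F.B) : F.Gen b := by
  have hι : IsGpdHomFun F.genGpd F.G (Subtype.val) :=
    ⟨fun a => rfl, fun a => rfl, fun a b hab =>
      (F.genComp_val (congrArg Subtype.val hab))⟩
  have hi' : IsFunctorToGpdFun S F.genGpd (fun a => ⟨F.i a, Gen.base a⟩) := by
    refine ⟨fun a => Subtype.ext (F.i_hom.1 a), fun a => Subtype.ext (F.i_hom.2.1 a),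
      fun a b hab => Subtype.ext ?_⟩
    have h1 : F.G.src (F.i a) = F.G.rng (F.i b) := by rw [← F.i_hom.1, ← F.i_hom.2.1, hab]
    rw [show (F.genGpd.comp ⟨F.i a, Gen.base a⟩ ⟨F.i b, Gen.base b⟩).1
        = F.G.comp (F.i a) (F.i b) from F.genComp_val h1]
    exact F.i_hom.2.2 a b hab
  obtain ⟨F', ⟨hF'hom, hF'i⟩, -⟩ := F.univ F.genGpd _ hi'
  obtain ⟨W, -, hWuniq⟩ := F.univ F.G F.i F.i_hom
  have e1 := hWuniq (Subtype.val ∘ F') ⟨isGpdHomFun_comp hF'hom hι,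
    fun a => congrArg Subtype.val (hF'i a)⟩
  have e2 := hWuniq id ⟨⟨fun _ => rfl, fun _ => rfl, fun _ _ _ => rfl⟩, fun a => rfl⟩
  have hb : (F' b).1 = b := congrFun (e1.trans e2.symm) b
  exact hb ▸ (F' b).2

end FundamentalGroupoid

section Covering

variable {k : ℕ} {A A' : Type} {Λ : KGraphStruct k A} {Ω : KGraphStruct k A'} {p : A' → A}

theorem IsCovering.p_vertex (hp : IsCovering Ω Λ p) {w : A'} (hw : Ω.IsVertex w) :
    Λ.IsVertex (p w) := by
  rw [KGraphStruct.IsVertex, ← hp.hom.1, hw]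

theorem IsCovering.vertex_of_p (hp : IsCovering Ω Λ p) {e : A'} (he : Λ.IsVertex (p e)) :
    Ω.IsVertex e :=
  hp.src_inj (Ω.src e) e (Ω.src_src e) (by rw [hp.hom.1, he])

theorem connected_of_surj_hom {f : A' → A} (hf : IsKGraphHomFun Ω Λ f)
    (hsurj : Function.Surjective f) (hconn : Ω.Connected) : Λ.Connected := by
  intro u v hu hv
  obtain ⟨a, ha⟩ := hsurj u
  obtain ⟨b, hb⟩ := hsurj v
  have hu' : u = f (Ω.src a) := by rw [hf.1, ha, hu]
  have hv' : v = f (Ω.src b) := by rw [hf.1, hb, hv]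
  have key : ∀ x y, Relation.EqvGen (fun a b => ∃ g, Ω.rng g = a ∧ Ω.src g = b) x y →
      Relation.EqvGen (fun a b => ∃ g, Λ.rng g = a ∧ Λ.src g = b) (f x) (f y) := by
    intro x y h
    induction h with
    | rel x y hxy =>
      obtain ⟨g, h1, h2⟩ := hxy
      exact .rel _ _ ⟨f g, by rw [← hf.2.1, h1], by rw [← hf.1, h2]⟩
    | refl x => exact .refl _
    | symm x y _ ih => exact .symm _ _ ih
    | trans x y z _ _ ih1 ih2 => exact .trans _ _ _ ih1 ih2
  rw [hu', hv']
  exact key _ _ (hconn (Ω.src a) (Ω.src b) (Ω.src_src a) (Ω.src_src b))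

variable {F : FundamentalGroupoid Λ} {act : F.B → A' → A'}

theorem CorrespondingAction.act_inv_left (hact : CorrespondingAction Ω Λ F p act)
    {b : F.B} {w : A'} (hw : Ω.IsVertex w) (hb : F.G.src b = F.i (p w)) :
    act (F.G.inv b) (act b w) = w := by
  rw [← hact.act_comp (F.G.inv b) b w hw hb (F.G.src_inv b), F.G.inv_comp_self, hb]
  exact hact.act_id w hw

theorem CorrespondingAction.act_inv_right (hact : CorrespondingAction Ω Λ F p act)
    {b : F.B} {w : A'} (hw : Ω.IsVertex w) (hb : F.G.rng b = F.i (p w)) :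
    act b (act (F.G.inv b) w) = w := by
  rw [← hact.act_comp b (F.G.inv b) w hw (by rw [F.G.src_inv, hb]) (F.G.rng_inv b).symm,
    F.G.comp_inv_self, hb]
  exact hact.act_id w hw

theorem CorrespondingAction.act_trans (hact : CorrespondingAction Ω Λ F p act)
    (hp : IsCovering Ω Λ p) (hconn : Ω.Connected) (u w : A')
    (hu : Ω.IsVertex u) (hw : Ω.IsVertex w) :
    ∃ a, F.G.src a = F.i (p w) ∧ act a w = u := by
  have key : ∀ x y, Relation.EqvGen (fun a b => ∃ f, Ω.rng f = a ∧ Ω.src f = b) x y →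
      (Ω.IsVertex x ↔ Ω.IsVertex y) ∧ (Ω.IsVertex x → Ω.IsVertex y →
        ∃ a, F.G.src a = F.i (p y) ∧ act a y = x) := by
    intro x y h
    induction h with
    | rel x y hxy =>
      obtain ⟨f, h1, h2⟩ := hxy
      subst h1; subst h2
      refine ⟨by simp [Ω.isVertex_rng, Ω.isVertex_src], fun _ _ => ⟨F.i (p f), ?_,
        hact.act_cov f⟩⟩
      rw [← F.i_hom.1, hp.hom.1 f]
    | refl x =>
      exact ⟨Iff.rfl, fun hx _ => ⟨F.i (p x), F.src_i_vertex (hp.p_vertex hx),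
        hact.act_id x hx⟩⟩
    | symm x y _ ih =>
      refine ⟨ih.1.symm, fun hy hx => ?_⟩
      obtain ⟨a, ha1, ha2⟩ := ih.2 hx hy
      refine ⟨F.G.inv a, ?_, ?_⟩
      · rw [F.G.src_inv, ← (hact.act_vertex a y hy ha1).2, ha2]
      · rw [← ha2]
        exact hact.act_inv_left hy ha1
    | trans x y z _ _ ih1 ih2 =>
      refine ⟨ih1.1.trans ih2.1, fun hx hz => ?_⟩
      have hy := ih1.1.mp hx
      obtain ⟨a, ha1, ha2⟩ := ih1.2 hx hy
      obtain ⟨b, hb1, hb2⟩ := ih2.2 hy hz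
      have hab : F.G.src a = F.G.rng b := by
        rw [ha1, ← (hact.act_vertex b z hz hb1).2, hb2]
      refine ⟨F.G.comp a b, by rw [F.G.src_comp _ _ hab, hb1], ?_⟩
      rw [hact.act_comp a b z hz hb1 hab, hb2, ha2]
  exact (key u w (hconn u w hu hw)).2 hu hw

end Covering

section Triv

variable {k : ℕ} {A : Type} (Λ : KGraphStruct k A) (F : FundamentalGroupoid Λ) (x : A)

/-- The total space of the standard simply connected covering: pairs of an
arrow of `Λ` and a groupoid arrow from `i x` to the source of the arrow. -/
def TrivC : Type :=
  {q : A × F.B // F.G.rng q.2 = F.i (Λ.src q.1) ∧ F.G.src q.2 = F.i x}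

variable {Λ F x}

theorem TrivC.ext {q r : TrivC Λ F x} (h1 : q.1.1 = r.1.1) (h2 : q.1.2 = r.1.2) : q = r :=
  Subtype.ext (Prod.ext h1 h2)

variable (Λ F x)

/-- Source map. -/
def trivSrc (q : TrivC Λ F x) : TrivC Λ F x :=
  ⟨(Λ.src q.1.1, q.1.2), by rw [Λ.src_src]; exact q.2.1, q.2.2⟩

theorem triv_guard (q : TrivC Λ F x) : F.G.src (F.i q.1.1) = F.G.rng q.1.2 := by
  rw [← F.i_hom.1, q.2.1]

/-- Range map. -/
def trivRng (q : TrivC Λ F x) : TrivC Λ F x :=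
  ⟨(Λ.rng q.1.1, F.G.comp (F.i q.1.1) q.1.2), by
    rw [F.G.rng_comp _ _ (triv_guard Λ F x q), ← F.i_hom.2.1, Λ.src_rng], by
    rw [F.G.src_comp _ _ (triv_guard Λ F x q), q.2.2]⟩

open Classical in
/-- Composition. -/
noncomputable def trivComp (q r : TrivC Λ F x) : TrivC Λ F x :=
  if h : Λ.src q.1.1 = Λ.rng r.1.1 ∧ q.1.2 = F.G.comp (F.i r.1.1) r.1.2 then
    ⟨(Λ.comp q.1.1 r.1.1, r.1.2), by rw [Λ.src_comp _ _ h.1]; exact r.2.1, r.2.2⟩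
  else q

theorem trivComp_pos {q r : TrivC Λ F x} (h1 : Λ.src q.1.1 = Λ.rng r.1.1)
    (h2 : q.1.2 = F.G.comp (F.i r.1.1) r.1.2) :
    (trivComp Λ F x q r).1 = (Λ.comp q.1.1 r.1.1, r.1.2) := by
  exact congrArg Subtype.val (@dif_pos _ _ ⟨h1, h2⟩ _ _ _)

theorem trivComp_fst {q r : TrivC Λ F x} (h1 : Λ.src q.1.1 = Λ.rng r.1.1)
    (h2 : q.1.2 = F.G.comp (F.i r.1.1) r.1.2) :
    (trivComp Λ F x q r).1.1 = Λ.comp q.1.1 r.1.1 := by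
  rw [trivComp_pos Λ F x h1 h2]

theorem trivComp_snd {q r : TrivC Λ F x} (h1 : Λ.src q.1.1 = Λ.rng r.1.1)
    (h2 : q.1.2 = F.G.comp (F.i r.1.1) r.1.2) :
    (trivComp Λ F x q r).1.2 = r.1.2 := by
  rw [trivComp_pos Λ F x h1 h2]

theorem trivSrc_fst (q : TrivC Λ F x) : (trivSrc Λ F x q).1.1 = Λ.src q.1.1 := rfl
theorem trivSrc_snd (q : TrivC Λ F x) : (trivSrc Λ F x q).1.2 = q.1.2 := rfl
theorem trivRng_fst (q : TrivC Λ F x) : (trivRng Λ F x q).1.1 = Λ.rng q.1.1 := rfl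
theorem trivRng_snd (q : TrivC Λ F x) :
    (trivRng Λ F x q).1.2 = F.G.comp (F.i q.1.1) q.1.2 := rfl

/-- The standard simply connected covering `k`-graph. -/
noncomputable def trivK : KGraphStruct k (TrivC Λ F x) where
  src := trivSrc Λ F x
  rng := trivRng Λ F x
  comp := trivComp Λ F x
  deg q := Λ.deg q.1.1
  src_src f := TrivC.ext (Λ.src_src f.1.1) rfl
  rng_src f := by
    refine TrivC.ext ?_ ?_
    · simp only [trivRng_fst, trivSrc_fst, trivSrc_snd, Λ.rng_src]
    · simp only [trivRng_snd, trivSrc_fst, trivSrc_snd]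
      exact F.G.comp_id_left f.2.1
  src_rng f := TrivC.ext (Λ.src_rng f.1.1) rfl
  rng_rng f := by
    refine TrivC.ext ?_ ?_
    · simp only [trivRng_fst, Λ.rng_rng]
    · simp only [trivRng_snd, trivRng_fst]
      refine F.G.comp_id_left ?_
      rw [F.G.rng_comp _ _ (triv_guard Λ F x f), ← F.i_hom.2.1]
  comp_src_id f := by
    have h2 : f.1.2 = F.G.comp (F.i (trivSrc Λ F x f).1.1) (trivSrc Λ F x f).1.2 := by
      simp only [trivSrc_fst, trivSrc_snd]
      exact (F.G.comp_id_left f.2.1).symm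
    have h1 : Λ.src f.1.1 = Λ.rng (trivSrc Λ F x f).1.1 := by
      simp only [trivSrc_fst, Λ.rng_src]
    refine TrivC.ext ?_ ?_
    · rw [trivComp_fst Λ F x h1 h2, trivSrc_fst, Λ.comp_src_id]
    · rw [trivComp_snd Λ F x h1 h2, trivSrc_snd]
  rng_comp_id f := by
    have h1 : Λ.src (trivRng Λ F x f).1.1 = Λ.rng f.1.1 := by
      simp only [trivRng_fst, Λ.src_rng]
    have h2 : (trivRng Λ F x f).1.2 = F.G.comp (F.i f.1.1) f.1.2 := trivRng_snd Λ F x f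
    refine TrivC.ext ?_ ?_
    · rw [trivComp_fst Λ F x h1 h2, trivRng_fst, Λ.rng_comp_id]
    · rw [trivComp_snd Λ F x h1 h2]
  src_comp f g h := by
    have h1 : Λ.src f.1.1 = Λ.rng g.1.1 := congrArg (fun t => t.1.1) h
    have h2 : f.1.2 = F.G.comp (F.i g.1.1) g.1.2 := congrArg (fun t => t.1.2) h
    refine TrivC.ext ?_ ?_
    · simp only [trivSrc_fst]
      rw [trivComp_fst Λ F x h1 h2, Λ.src_comp _ _ h1]
    · simp only [trivSrc_snd]
      rw [trivComp_snd Λ F x h1 h2]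
  rng_comp f g h := by
    have h1 : Λ.src f.1.1 = Λ.rng g.1.1 := congrArg (fun t => t.1.1) h
    have h2 : f.1.2 = F.G.comp (F.i g.1.1) g.1.2 := congrArg (fun t => t.1.2) h
    have g1 : F.G.src (F.i f.1.1) = F.G.rng (F.i g.1.1) := by
      rw [← F.i_hom.1, ← F.i_hom.2.1, h1]
    refine TrivC.ext ?_ ?_
    · simp only [trivRng_fst]
      rw [trivComp_fst Λ F x h1 h2, Λ.rng_comp _ _ h1]
    · simp only [trivRng_snd]
      rw [trivComp_fst Λ F x h1 h2, trivComp_snd Λ F x h1 h2, F.i_hom.2.2 _ _ h1,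
        F.G.assoc _ _ _ g1 (triv_guard Λ F x g), ← h2]
  assoc f g h hfg hgh := by
    have h1 : Λ.src f.1.1 = Λ.rng g.1.1 := congrArg (fun t => t.1.1) hfg
    have h2 : f.1.2 = F.G.comp (F.i g.1.1) g.1.2 := congrArg (fun t => t.1.2) hfg
    have h3 : Λ.src g.1.1 = Λ.rng h.1.1 := congrArg (fun t => t.1.1) hgh
    have h4 : g.1.2 = F.G.comp (F.i h.1.1) h.1.2 := congrArg (fun t => t.1.2) hgh
    have g1 : F.G.src (F.i g.1.1) = F.G.rng (F.i h.1.1) := by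
      rw [← F.i_hom.1, ← F.i_hom.2.1, h3]
    have e1 : Λ.src (trivComp Λ F x f g).1.1 = Λ.rng h.1.1 := by
      rw [trivComp_fst Λ F x h1 h2, Λ.src_comp _ _ h1, h3]
    have e2 : (trivComp Λ F x f g).1.2 = F.G.comp (F.i h.1.1) h.1.2 := by
      rw [trivComp_snd Λ F x h1 h2, h4]
    have e3 : Λ.src f.1.1 = Λ.rng (trivComp Λ F x g h).1.1 := by
      rw [trivComp_fst Λ F x h3 h4, Λ.rng_comp _ _ h3, h1]
    have e4 : f.1.2 = F.G.comp (F.i (trivComp Λ F x g h).1.1) (trivComp Λ F x g h).1.2 := by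
      rw [trivComp_fst Λ F x h3 h4, trivComp_snd Λ F x h3 h4, F.i_hom.2.2 _ _ h3,
        F.G.assoc _ _ _ g1 (triv_guard Λ F x h), ← h4, ← h2]
    refine TrivC.ext ?_ ?_
    · rw [trivComp_fst Λ F x e1 e2, trivComp_fst Λ F x e3 e4, trivComp_fst Λ F x h1 h2,
        trivComp_fst Λ F x h3 h4, Λ.assoc _ _ _ h1 h3]
    · rw [trivComp_snd Λ F x e1 e2, trivComp_snd Λ F x e3 e4, trivComp_snd Λ F x h3 h4]
  deg_comp f g h := by
    have h1 : Λ.src f.1.1 = Λ.rng g.1.1 := congrArg (fun t => t.1.1) h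
    have h2 : f.1.2 = F.G.comp (F.i g.1.1) g.1.2 := congrArg (fun t => t.1.2) h
    show Λ.deg (trivComp Λ F x f g).1.1 = _
    rw [trivComp_fst Λ F x h1 h2, Λ.deg_comp _ _ h1]
  deg_src f := Λ.deg_src f.1.1
  factor f m n hd := by
    obtain ⟨⟨α, β⟩, ⟨hsr, hdm, hdn, hcomp⟩, huniq⟩ := Λ.factor f.1.1 m n hd
    have hsβ : F.G.rng f.1.2 = F.i (Λ.src β) := by
      rw [f.2.1, ← hcomp, Λ.src_comp _ _ hsr]
    have gβ : F.G.src (F.i β) = F.G.rng f.1.2 := by rw [← F.i_hom.1, hsβ]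
    refine ⟨(⟨(α, F.G.comp (F.i β) f.1.2), ?_, ?_⟩, ⟨(β, f.1.2), hsβ, f.2.2⟩),
      ⟨?_, hdm, hdn, ?_⟩, ?_⟩
    · rw [F.G.rng_comp _ _ gβ, ← F.i_hom.2.1, hsr]
    · rw [F.G.src_comp _ _ gβ, f.2.2]
    · exact TrivC.ext hsr rfl
    · exact TrivC.ext (by rw [trivComp_fst Λ F x hsr rfl, hcomp])
        (trivComp_snd Λ F x hsr rfl)
    · rintro ⟨q1, q2⟩ ⟨c1, c2, c3, c4⟩
      have e1 : Λ.src q1.1.1 = Λ.rng q2.1.1 := congrArg (fun t => t.1.1) c1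
      have e2 : q1.1.2 = F.G.comp (F.i q2.1.1) q2.1.2 := congrArg (fun t => t.1.2) c1
      have e3 : Λ.comp q1.1.1 q2.1.1 = f.1.1 := by
        rw [← trivComp_fst Λ F x e1 e2, c4]
      have e4 : q2.1.2 = f.1.2 := by rw [← trivComp_snd Λ F x e1 e2, c4]
      have huq := huniq (q1.1.1, q2.1.1) ⟨e1, c2, c3, e3⟩
      have eα : q1.1.1 = α := congrArg Prod.fst huq
      have eβ : q2.1.1 = β := congrArg Prod.snd huq
      refine Prod.ext (TrivC.ext eα ?_) (TrivC.ext eβ e4)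
      rw [e2, eβ, e4]

/-- The covering map of the standard covering. -/
def trivP (q : TrivC Λ F x) : A := q.1.1

theorem triv_vertex_fst {v : TrivC Λ F x} (hv : (trivK Λ F x).IsVertex v) :
    Λ.src v.1.1 = v.1.1 :=
  congrArg (fun t => t.1.1) hv

/-- Connectivity of `Λ` yields groupoid arrows between `i`-images of vertices. -/
theorem conn_gpd (hconn : Λ.Connected) (u u' : A) (hu : Λ.IsVertex u)
    (hu' : Λ.IsVertex u') : ∃ c, F.G.src c = F.i u' ∧ F.G.rng c = F.i u := by
  have key : ∀ a b, Relation.EqvGen (fun a b => ∃ f, Λ.rng f = a ∧ Λ.src f = b) a b →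
      (Λ.IsVertex a ↔ Λ.IsVertex b) ∧ (Λ.IsVertex a → Λ.IsVertex b →
        ∃ c, F.G.src c = F.i b ∧ F.G.rng c = F.i a) := by
    intro a b h
    induction h with
    | rel a b hab =>
      obtain ⟨f, h1, h2⟩ := hab
      subst h1; subst h2
      exact ⟨by simp [Λ.isVertex_rng, Λ.isVertex_src], fun _ _ =>
        ⟨F.i f, (F.i_hom.1 f).symm, (F.i_hom.2.1 f).symm⟩⟩
    | refl a =>
      exact ⟨Iff.rfl, fun ha _ => ⟨F.i a, F.src_i_vertex ha, F.rng_i_vertex ha⟩⟩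
    | symm a b _ ih =>
      refine ⟨ih.1.symm, fun hb ha => ?_⟩
      obtain ⟨c, h1, h2⟩ := ih.2 ha hb
      exact ⟨F.G.inv c, by rw [F.G.src_inv, h2], by rw [F.G.rng_inv, h1]⟩
    | trans a b c _ _ ih1 ih2 =>
      refine ⟨ih1.1.trans ih2.1, fun ha hc => ?_⟩
      have hb := ih1.1.mp ha
      obtain ⟨c1, h1, h2⟩ := ih1.2 ha hb
      obtain ⟨c2, h3, h4⟩ := ih2.2 hb hc
      exact ⟨F.G.comp c1 c2, by rw [F.G.src_comp _ _ (by rw [h1, h4]), h3],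
        by rw [F.G.rng_comp _ _ (by rw [h1, h4]), h2]⟩
  exact (key u u' (hconn u u' hu hu')).2 hu hu'

/-- The standard covering map is a covering. -/
theorem trivP_covering (hx : Λ.IsVertex x) (hconn : Λ.Connected) :
    IsCovering (trivK Λ F x) Λ (trivP Λ F x) := by
  constructor
  · refine ⟨fun a => rfl, fun a => rfl, fun a b hab => ?_, fun a => rfl⟩
    exact trivComp_fst Λ F x (congrArg (fun t => t.1.1) hab) (congrArg (fun t => t.1.2) hab)
  · intro g
    obtain ⟨c, hc1, hc2⟩ := conn_gpd Λ F hconn (Λ.src g) x (Λ.isVertex_src g) hx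
    exact ⟨⟨(g, c), hc2, hc1⟩, rfl⟩
  · intro a b h1 h2
    exact TrivC.ext h2 (congrArg (fun t => t.1.2) h1)
  · intro v hv g hg
    have hvv : Λ.src v.1.1 = v.1.1 := triv_vertex_fst Λ F x hv
    refine ⟨⟨(g, v.1.2), ?_, v.2.2⟩, TrivC.ext hg rfl, rfl⟩
    rw [hg, v.2.1, hvv]; rfl
  · intro a b h1 h2
    have hsnd : F.G.comp (F.i a.1.1) a.1.2 = F.G.comp (F.i b.1.1) b.1.2 :=
      congrArg (fun t => t.1.2) h1
    have h2' : a.1.1 = b.1.1 := h2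
    rw [← h2'] at hsnd
    refine TrivC.ext h2' ?_
    refine F.G.comp_left_cancel (triv_guard Λ F x a) ?_ hsnd
    rw [← F.i_hom.1, b.2.1, h2']
  · intro v hv g hg
    have hvv : Λ.src v.1.1 = v.1.1 := triv_vertex_fst Λ F x hv
    have hrv : F.G.rng v.1.2 = F.i v.1.1 := by rw [v.2.1, hvv]
    have gg : F.G.src (F.G.inv (F.i g)) = F.G.rng v.1.2 := by
      rw [F.G.src_inv, ← F.i_hom.2.1, hg, hrv]; rfl
    refine ⟨⟨(g, F.G.comp (F.G.inv (F.i g)) v.1.2), ?_, ?_⟩, ?_, rfl⟩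
    · rw [F.G.rng_comp _ _ gg, F.G.rng_inv, ← F.i_hom.1]
    · rw [F.G.src_comp _ _ gg, v.2.2]
    · refine TrivC.ext hg ?_
      show F.G.comp (F.i g) (F.G.comp (F.G.inv (F.i g)) v.1.2) = v.1.2
      refine F.G.comp_comp_inv ?_
      rw [← F.i_hom.2.1, hg, hrv]; rfl

theorem eqvgen_congr {α : Type _} {R : α → α → Prop} {a a' b b' : α}
    (h : Relation.EqvGen R a b) (ha : a = a') (hb : b = b') :
    Relation.EqvGen R a' b' := ha ▸ hb ▸ h

/-- The standard covering is connected. -/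
theorem trivK_connected (hx : Λ.IsVertex x) : (trivK Λ F x).Connected := by
  set R := fun a b : TrivC Λ F x => ∃ f, (trivK Λ F x).rng f = a ∧ (trivK Λ F x).src f = b
    with hR
  have key : ∀ c, F.Gen c → ∀ (d : F.B) (u u' : A), Λ.IsVertex u → Λ.IsVertex u' →
      F.G.rng c = F.i u → F.G.src c = F.i u' → F.G.src d = F.i x → F.G.rng d = F.i u' →
      ∀ (p1 : F.G.rng (F.G.comp c d) = F.i (Λ.src u) ∧ F.G.src (F.G.comp c d) = F.i x)
        (p2 : F.G.rng d = F.i (Λ.src u') ∧ F.G.src d = F.i x),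
        Relation.EqvGen R ⟨(u, F.G.comp c d), p1⟩ ⟨(u', d), p2⟩ := by
    intro c hc
    induction hc with
    | base a =>
      intro d u u' hu hu' hcr hcs hd1 hd2 p1 p2
      have hu1 : u = Λ.rng a := F.i_inj hu (Λ.isVertex_rng a) (by rw [← hcr, ← F.i_hom.2.1])
      have hu2 : u' = Λ.src a := F.i_inj hu' (Λ.isVertex_src a) (by rw [← hcs, ← F.i_hom.1])
      refine Relation.EqvGen.rel _ _ ⟨⟨(a, d), by rw [hd2, hu2], hd1⟩, ?_, ?_⟩
      · exact TrivC.ext hu1.symm rfl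
      · exact TrivC.ext hu2.symm rfl
    | @ginv b hb ih =>
      intro d u u' hu hu' hcr hcs hd1 hd2 p1 p2
      have hbs : F.G.src b = F.i u := by rw [← F.G.rng_inv, hcr]
      have hbr : F.G.rng b = F.i u' := by rw [← F.G.src_inv, hcs]
      have g1 : F.G.src (F.G.inv b) = F.G.rng d := by rw [F.G.src_inv, hbr, hd2]
      have hbd : F.G.rng b = F.G.rng d := by rw [hbr, hd2]
      have hd1' : F.G.src (F.G.comp (F.G.inv b) d) = F.i x := by rw [F.G.src_comp _ _ g1, hd1]
      have hd2' : F.G.rng (F.G.comp (F.G.inv b) d) = F.i u := by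
        rw [F.G.rng_comp _ _ g1, F.G.rng_inv, hbs]
      have ihh := ih (F.G.comp (F.G.inv b) d) u' u hu' hu hbr hbs hd1' hd2'
        ⟨by rw [F.G.comp_comp_inv hbd, hd2, hu'], by rw [F.G.comp_comp_inv hbd, hd1]⟩
        ⟨by rw [hd2', hu], hd1'⟩
      exact eqvgen_congr (Relation.EqvGen.symm _ _ ihh) (Subtype.ext rfl)
        (TrivC.ext rfl (F.G.comp_comp_inv hbd))
    | @gcomp b b' hb hb' hgd ih ih' =>
      intro d u u' hu hu' hcr hcs hd1 hd2 p1 p2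
      have hbr : F.G.rng b = F.i u := by rw [← F.G.rng_comp _ _ hgd, hcr]
      have hbs' : F.G.src b' = F.i u' := by rw [← F.G.src_comp _ _ hgd, hcs]
      obtain ⟨w, ⟨hw, hiw⟩, -⟩ := F.obj_bij (F.G.rng b') (F.G.src_rng b')
      have g2 : F.G.src b' = F.G.rng d := by rw [hbs', hd2]
      have gb : F.G.src b = F.G.rng (F.G.comp b' d) := by rw [hgd, F.G.rng_comp _ _ g2]
      have hd1' : F.G.src (F.G.comp b' d) = F.i x := by rw [F.G.src_comp _ _ g2, hd1]
      have hd2' : F.G.rng (F.G.comp b' d) = F.i w := by rw [F.G.rng_comp _ _ g2, hiw]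
      have ihh' := ih' d w u' hw hu' hiw.symm hbs' hd1 hd2
        ⟨by rw [hd2', hw], hd1'⟩ ⟨by rw [hd2, hu'], hd1⟩
      have ihh := ih (F.G.comp b' d) u w hu hw hbr (by rw [hgd, ← hiw]) hd1' hd2'
        ⟨by rw [F.G.rng_comp _ _ gb, hbr, hu], by rw [F.G.src_comp _ _ gb, hd1']⟩
        ⟨by rw [hd2', hw], hd1'⟩
      exact eqvgen_congr (Relation.EqvGen.trans _ _ _ ihh ihh')
        (TrivC.ext rfl (F.G.assoc b b' d hgd g2).symm) (Subtype.ext rfl)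
  let base : TrivC Λ F x := ⟨(x, F.i x), by rw [hx]; exact F.rng_i_vertex hx,
    F.src_i_vertex hx⟩
  have key_t : ∀ t : TrivC Λ F x, (trivK Λ F x).IsVertex t →
      Relation.EqvGen R t base := by
    intro t ht
    have htv : Λ.src t.1.1 = t.1.1 := triv_vertex_fst Λ F x ht
    have h1 : F.G.rng t.1.2 = F.i t.1.1 := by rw [t.2.1, htv]
    have gg : F.G.src t.1.2 = F.G.rng (F.i x) := by rw [t.2.2, F.rng_i_vertex hx]
    have hkey := key t.1.2 (F.gen_all t.1.2) (F.i x) t.1.1 x htv hx h1 t.2.2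
      (F.src_i_vertex hx) (F.rng_i_vertex hx)
      ⟨by rw [F.G.rng_comp _ _ gg, h1, htv], by rw [F.G.src_comp _ _ gg, F.src_i_vertex hx]⟩
      ⟨by rw [F.rng_i_vertex hx, hx], F.src_i_vertex hx⟩
    exact eqvgen_congr hkey (TrivC.ext rfl (F.G.comp_id_right t.2.2)) (Subtype.ext rfl)
  intro u v hu hv
  exact Relation.EqvGen.trans _ _ _ (key_t u hu) (Relation.EqvGen.symm _ _ (key_t v hv))

end Triv

section Free

variable {k : ℕ} {A A' : Type} {Λ : KGraphStruct k A} {Ω : KGraphStruct k A'}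
  {p : A' → A} {F : FundamentalGroupoid Λ} {act : F.B → A' → A'} {x : A}

theorem claimG (hp : IsCovering Ω Λ p) (hact : CorrespondingAction Ω Λ F p act)
    (φ : A' → TrivC Λ F x) (hφ : IsKGraphHomFun Ω (trivK Λ F x) φ)
    (hφp : ∀ a, trivP Λ F x (φ a) = p a) (a : F.B) :
    ∀ w, Ω.IsVertex w → F.G.src a = F.i (p w) →
      (φ (act a w)).1.2 = F.G.comp a ((φ w).1.2) := by
  induction F.gen_all a with
  | base lam =>
    intro w hw hsrc
    have hps : Λ.src lam = p w :=
      F.i_inj (Λ.isVertex_src lam) (hp.p_vertex hw) (by rw [F.i_hom.1, hsrc])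
    obtain ⟨e, he1, he2⟩ := hp.src_lift w hw lam (by rw [hps])
    have hact_e : act (F.i lam) w = Ω.rng e := by
      rw [← he2, ← he1]; exact hact.act_cov e
    rw [hact_e, hφ.2.1 e]
    show F.G.comp (F.i (φ e).1.1) (φ e).1.2 = _
    have h3 : (φ e).1.1 = lam := (hφp e).trans he2
    have h4 : (φ w).1.2 = (φ e).1.2 := by rw [← he1, hφ.1 e]; rfl
    rw [h3, h4]
  | @ginv b hb ih =>
    intro w hw hsrc
    have hrb : F.G.rng b = F.i (p w) := by rw [← F.G.src_inv, hsrc]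
    have hw' : Ω.IsVertex (act (F.G.inv b) w) := (hact.act_vertex _ w hw hsrc).1
    have hfw' : F.i (p (act (F.G.inv b) w)) = F.G.rng (F.G.inv b) :=
      (hact.act_vertex _ w hw hsrc).2
    have hsb : F.G.src b = F.i (p (act (F.G.inv b) w)) := by rw [hfw', F.G.rng_inv]
    have hbw : act b (act (F.G.inv b) w) = w := hact.act_inv_right hw hrb
    have ihh := ih (act (F.G.inv b) w) hw' hsb
    rw [hbw] at ihh
    rw [ihh]
    refine (F.G.comp_inv_comp ?_).symm
    rw [hsb, (φ (act (F.G.inv b) w)).2.1]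
    have h5 : (φ (act (F.G.inv b) w)).1.1 = p (act (F.G.inv b) w) := hφp _
    rw [h5, hp.p_vertex hw']
  | @gcomp b b' hb hb' hgd ih ih' =>
    intro w hw hsrc
    have hsb' : F.G.src b' = F.i (p w) := by rw [← F.G.src_comp _ _ hgd, hsrc]
    have h1 := hact.act_comp b b' w hw hsb' hgd
    have hw2 : Ω.IsVertex (act b' w) := (hact.act_vertex b' w hw hsb').1
    have hfw2 : F.i (p (act b' w)) = F.G.rng b' := (hact.act_vertex b' w hw hsb').2
    have ih2 := ih' w hw hsb'
    have ih1 := ih (act b' w) hw2 (by rw [hgd, hfw2])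
    have g : F.G.src b' = F.G.rng ((φ w).1.2) := by
      rw [hsb', (φ w).2.1]
      have h5 : (φ w).1.1 = p w := hφp w
      rw [h5, hp.p_vertex hw]
    rw [h1, ih1, ih2, ← F.G.assoc b b' _ hgd g]
  
theorem stab_free (hp : IsUniversalCovering Ω Λ p) (hx : Λ.IsVertex x)
    (hact : CorrespondingAction Ω Λ F p act) (v : A') (hv : Ω.IsVertex v) (hpv : p v = x) :
    ∀ a, F.G.src a = F.i x → act a v = v → a = F.i x := by
  obtain ⟨hpc, hconn, huniv⟩ := hp
  have hΛconn : Λ.Connected := connected_of_surj_hom hpc.hom hpc.surj hconn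
  obtain ⟨φ, hφ, hφp⟩ := huniv (TrivC Λ F x) (trivK Λ F x) (trivP Λ F x)
    (trivP_covering Λ F x hx hΛconn) (trivK_connected Λ F x hx)
  intro a ha hav
  have h1 := claimG hpc hact φ hφ hφp a v hv (by rw [ha, hpv])
  rw [hav] at h1
  have hc0r : F.G.rng ((φ v).1.2) = F.i x := by
    rw [(φ v).2.1]
    have h5 : (φ v).1.1 = p v := hφp v
    rw [h5, hpv, hx]
  calc a = F.G.comp a (F.i x) := (F.G.comp_id_right ha).symm
    _ = F.G.comp a (F.G.comp ((φ v).1.2) (F.G.inv ((φ v).1.2))) := by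
        rw [F.G.comp_inv_self, hc0r]
    _ = F.G.comp (F.G.comp a ((φ v).1.2)) (F.G.inv ((φ v).1.2)) :=
        (F.G.assoc _ _ _ (by rw [ha, hc0r]) (F.G.rng_inv _).symm).symm
    _ = F.G.comp ((φ v).1.2) (F.G.inv ((φ v).1.2)) := by rw [← h1]
    _ = F.i x := by rw [F.G.comp_inv_self, hc0r]

theorem act_witness_unique (hp : IsUniversalCovering Ω Λ p) (hx : Λ.IsVertex x)
    (hact : CorrespondingAction Ω Λ F p act) (v : A') (hv : Ω.IsVertex v) (hpv : p v = x)
    {a a' : F.B} (ha : F.G.src a = F.i x) (ha' : F.G.src a' = F.i x)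
    (heq : act a v = act a' v) : a = a' := by
  have hav : F.G.src a = F.i (p v) := by rw [ha, hpv]
  have hav' : F.G.src a' = F.i (p v) := by rw [ha', hpv]
  have hr : F.G.rng a = F.G.rng a' := by
    rw [← (hact.act_vertex a v hv hav).2, heq, (hact.act_vertex a' v hv hav').2]
  have g1 : F.G.src (F.G.inv a') = F.G.rng a := by rw [F.G.src_inv, hr]
  have hb : F.G.src (F.G.comp (F.G.inv a') a) = F.i x := by
    rw [F.G.src_comp _ _ g1, ha]
  have hbv : act (F.G.comp (F.G.inv a') a) v = v := by
    rw [hact.act_comp _ _ v hv hav g1, heq]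
    exact hact.act_inv_left hv hav'
  have hbid := stab_free hp hx hact v hv hpv _ hb hbv
  calc a = F.G.comp a' (F.G.comp (F.G.inv a') a) := (F.G.comp_comp_inv hr.symm).symm
    _ = F.G.comp a' (F.i x) := by rw [hbid]
    _ = a' := F.G.comp_id_right ha'

theorem claimF {A'' : Type} {Sg : KGraphStruct k A''} {r : A'' → A}
    (hp : IsCovering Ω Λ p) (hact : CorrespondingAction Ω Λ F p act)
    (hr : IsCovering Sg Λ r) (φ : A' → A'') (hφ : IsKGraphHomFun Ω Sg φ)
    (hφp : ∀ a, r (φ a) = p a) (a : F.B) :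
    ∀ w w', Ω.IsVertex w → Ω.IsVertex w' → F.G.src a = F.i (p w) →
      F.G.src a = F.i (p w') → (φ w = φ w' ↔ φ (act a w) = φ (act a w')) := by
  induction F.gen_all a with
  | base lam =>
    intro w w' hw hw' hsrc hsrc'
    have hps : Λ.src lam = p w :=
      F.i_inj (Λ.isVertex_src lam) (hp.p_vertex hw) (by rw [F.i_hom.1, hsrc])
    have hps' : Λ.src lam = p w' :=
      F.i_inj (Λ.isVertex_src lam) (hp.p_vertex hw') (by rw [F.i_hom.1, hsrc'])
    obtain ⟨e, he1, he2⟩ := hp.src_lift w hw lam (by rw [hps])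
    obtain ⟨e', he1', he2'⟩ := hp.src_lift w' hw' lam (by rw [hps'])
    have hae : act (F.i lam) w = Ω.rng e := by rw [← he2, ← he1]; exact hact.act_cov e
    have hae' : act (F.i lam) w' = Ω.rng e' := by rw [← he2', ← he1']; exact hact.act_cov e'
    rw [hae, hae', hφ.2.1 e, hφ.2.1 e']
    constructor
    · intro h
      have hee : φ e = φ e' := by
        refine hr.src_inj _ _ ?_ ?_
        · rw [← hφ.1, ← hφ.1, he1, he1', h]
        · rw [hφp, hφp, he2, he2']
      rw [hee]
    · intro h
      have hee : φ e = φ e' := by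
        refine hr.rng_inj _ _ h ?_
        rw [hφp, hφp, he2, he2']
      rw [← he1, ← he1', hφ.1, hφ.1, hee]
  | @ginv b hb ih =>
    intro w w' hw hw' hsrc hsrc'
    have hrb : F.G.rng b = F.i (p w) := by rw [← F.G.src_inv, hsrc]
    have hrb' : F.G.rng b = F.i (p w') := by rw [← F.G.src_inv, hsrc']
    have hw2 : Ω.IsVertex (act (F.G.inv b) w) := (hact.act_vertex _ w hw hsrc).1
    have hw2' : Ω.IsVertex (act (F.G.inv b) w') := (hact.act_vertex _ w' hw' hsrc').1
    have hs2 : F.G.src b = F.i (p (act (F.G.inv b) w)) := by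
      rw [(hact.act_vertex _ w hw hsrc).2, F.G.rng_inv]
    have hs2' : F.G.src b = F.i (p (act (F.G.inv b) w')) := by
      rw [(hact.act_vertex _ w' hw' hsrc').2, F.G.rng_inv]
    have hback : act b (act (F.G.inv b) w) = w := hact.act_inv_right hw hrb
    have hback' : act b (act (F.G.inv b) w') = w' := hact.act_inv_right hw' hrb'
    have ihh := ih (act (F.G.inv b) w) (act (F.G.inv b) w') hw2 hw2' hs2 hs2'
    rw [hback, hback'] at ihh
    exact ihh.symm
  | @gcomp b b' hb hb' hgd ih ih' =>
    intro w w' hw hw' hsrc hsrc'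
    have hs2 : F.G.src b' = F.i (p w) := by rw [← F.G.src_comp _ _ hgd, hsrc]
    have hs2' : F.G.src b' = F.i (p w') := by rw [← F.G.src_comp _ _ hgd, hsrc']
    have hw2 : Ω.IsVertex (act b' w) := (hact.act_vertex b' w hw hs2).1
    have hw2' : Ω.IsVertex (act b' w') := (hact.act_vertex b' w' hw' hs2').1
    have hs1 : F.G.src b = F.i (p (act b' w)) := by
      rw [hgd, (hact.act_vertex b' w hw hs2).2]
    have hs1' : F.G.src b = F.i (p (act b' w')) := by
      rw [hgd, (hact.act_vertex b' w' hw' hs2').2]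
    rw [hact.act_comp b b' w hw hs2 hgd, hact.act_comp b b' w' hw' hs2' hgd]
    exact (ih' w w' hw hw' hs2 hs2').trans (ih (act b' w) (act b' w') hw2 hw2' hs1 hs1')

theorem lift_ex (hpc : IsCovering Ω Λ p) (hact : CorrespondingAction Ω Λ F p act)
    (v : A') (hv : Ω.IsVertex v) (hpv : p v = x) (lam : A') (c : F.B)
    (hc1 : F.G.src c = F.i x) (hc2 : F.G.rng c = F.i x) (a : F.B)
    (ha : F.G.src a = F.i x) (hav : act a v = Ω.src lam) :
    ∃ e, p e = p lam ∧ Ω.src e = act (F.G.comp a c) v := by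
  have g1 : F.G.src a = F.G.rng c := by rw [ha, hc2]
  have hsac : F.G.src (F.G.comp a c) = F.i (p v) := by
    rw [F.G.src_comp _ _ g1, hc1, hpv]
  have hwv : Ω.IsVertex (act (F.G.comp a c) v) := (hact.act_vertex _ v hv hsac).1
  have hfw : F.i (p (act (F.G.comp a c) v)) = F.G.rng (F.G.comp a c) :=
    (hact.act_vertex _ v hv hsac).2
  have hpe : p (act (F.G.comp a c) v) = Λ.src (p lam) := by
    refine F.i_inj (hpc.p_vertex hwv) (Λ.isVertex_src (p lam)) ?_
    rw [hfw, F.G.rng_comp _ _ g1, ← (hact.act_vertex a v hv (by rw [ha, hpv])).2, hav,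
      hpc.hom.1]
  obtain ⟨e, he1, he2⟩ := hpc.src_lift (act (F.G.comp a c) v) hwv (p lam) hpe.symm
  exact ⟨e, he2, he1⟩

open Classical in
/-- The canonical right action of a subgroup on the covering, defined by lifting. -/
noncomputable def ractC (hpc : IsCovering Ω Λ p) (hact : CorrespondingAction Ω Λ F p act)
    (v : A') (hv : Ω.IsVertex v) (hpv : p v = x) (lam : A') (c : F.B) : A' :=
  if h : F.G.src c = F.i x ∧ F.G.rng c = F.i x ∧
      ∃ a, F.G.src a = F.i x ∧ act a v = Ω.src lam then
    Classical.choose (lift_ex hpc hact v hv hpv lam c h.1 h.2.1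
      (Classical.choose h.2.2) (Classical.choose_spec h.2.2).1
      (Classical.choose_spec h.2.2).2)
  else lam

theorem ractC_spec (hp : IsUniversalCovering Ω Λ p) (hx : Λ.IsVertex x)
    (hact : CorrespondingAction Ω Λ F p act)
    (v : A') (hv : Ω.IsVertex v) (hpv : p v = x) (lam : A') (c : F.B) (a : F.B)
    (hc1 : F.G.src c = F.i x) (hc2 : F.G.rng c = F.i x)
    (ha : F.G.src a = F.i x) (hav : act a v = Ω.src lam) :
    p (ractC hp.1 hact v hv hpv lam c) = p lam ∧
      Ω.src (ractC hp.1 hact v hv hpv lam c) = act (F.G.comp a c) v := by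
  have h : F.G.src c = F.i x ∧ F.G.rng c = F.i x ∧
      ∃ a, F.G.src a = F.i x ∧ act a v = Ω.src lam := ⟨hc1, hc2, a, ha, hav⟩
  have ha0 := Classical.choose_spec h.2.2
  have ha0a : Classical.choose h.2.2 = a :=
    act_witness_unique hp hx hact v hv hpv ha0.1 ha (ha0.2.trans hav.symm)
  rw [ractC, dif_pos h]
  obtain ⟨he1, he2⟩ := Classical.choose_spec (lift_ex hp.1 hact v hv hpv lam c h.1 h.2.1
    (Classical.choose h.2.2) ha0.1 ha0.2)
  exact ⟨he1, by rw [he2, ha0a]⟩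

end Free

/-- The data of a subgroup `H` of `π(Λ,x)` acting on the right of a universal
covering `p : Ω → Λ` by the canonical action (`λ·c` is the unique element
with `p(λc) = p(λ)` and `s(λc) = a c v` whenever `s(λ) = a v`), together with
the associated quotient `k`-graph `Ω/H` (a `k`-graph `Q` with a surjective
morphism `qmap` whose fibers are the `H`-orbits) and the induced covering
`qbar : Ω/H → Λ` (`λH ↦ p(λ)`). -/
structure SubgroupQuotientData {k : ℕ} {A A' : Type}
    (Λ : KGraphStruct k A) (Ω : KGraphStruct k A')
    (FΛ : FundamentalGroupoid Λ) (p : A' → A)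
    (act : FΛ.B → A' → A') (x : A) (v : A') : Type 1 where
  H : Set FΛ.B
  subgroup : FΛ.G.IsSubgroupAt (FΛ.i x) H
  ract : A' → FΛ.B → A'
  ract_spec : ∀ lam c a, c ∈ H → FΛ.G.src a = FΛ.i x → act a v = Ω.src lam →
    p (ract lam c) = p lam ∧ Ω.src (ract lam c) = act (FΛ.G.comp a c) v
  Qc : Type
  Q : KGraphStruct k Qc
  qmap : A' → Qc
  qmap_hom : IsKGraphHomFun Ω Q qmap
  qmap_surj : Function.Surjective qmap
  qmap_fib : ∀ a b, qmap a = qmap b ↔ ∃ c ∈ H, ract a c = b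
  qbar : Qc → A
  qbar_hom : IsKGraphHomFun Q Λ qbar
  qbar_comm : ∀ a, qbar (qmap a) = p a

/-- Let `p : Ω → Λ` be a universal covering, `x ∈ Λ⁰`,
`v ∈ p⁻¹(x)`, and `H` a subgroup of `π(Λ,x)` acting canonically on `(Ω,p)`.
Then the action of `H` is free, the associated covering `q : Ω/H → Λ` is a
connected covering, `H = q₊π(Ω/H, vH)`, and moreover every connected covering
of `Λ` is isomorphic to such a covering `Ω/H → Λ`. -/
theorem universal_quotient_classification {k : ℕ} {A A' : Type}
    (Λ : KGraphStruct k A) (Ω : KGraphStruct k A')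
    (p : A' → A) (hp : IsUniversalCovering Ω Λ p)
    (x : A) (hx : Λ.IsVertex x) (v : A') (hv : Ω.IsVertex v) (hpv : p v = x)
    (FΛ : FundamentalGroupoid Λ)
    (act : FΛ.B → A' → A') (hact : CorrespondingAction Ω Λ FΛ p act)
    (D : SubgroupQuotientData Λ Ω FΛ p act x v) :
    -- the canonical action of `H` on `(Ω,p)` is free
    (∀ w c, Ω.IsVertex w → c ∈ D.H → D.ract w c = w → c = FΛ.i x) ∧
    -- the associated covering `Ω/H → Λ` is a connected covering
    IsCovering D.Q Λ D.qbar ∧ D.Q.Connected ∧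
    -- `H = q₊ π(Ω/H, vH)`
    (∀ (FQ : FundamentalGroupoid D.Q) (qst : FQ.B → FΛ.B),
      IsGpdHomFun FQ.G FΛ.G qst → (∀ a, qst (FQ.i a) = FΛ.i (D.qbar a)) →
      D.H = qst '' FQ.pi1 (D.qmap v)) ∧
    -- every connected covering of `Λ` is isomorphic to some `Ω/H → Λ`
    (∀ (A'' : Type) (Sg : KGraphStruct k A'') (r : A'' → A),
      IsCovering Sg Λ r → Sg.Connected →
      ∃ D' : SubgroupQuotientData Λ Ω FΛ p act x v,
        ∃ φ : A'' → D'.Qc, Function.Bijective φ ∧ IsKGraphHomFun Sg D'.Q φ ∧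
          ∀ a, D'.qbar (φ a) = r a) := by
  classical
  have hpc := hp.1
  have hΩconn := hp.2.1
  have hHiso := D.subgroup.1
  have hHone := D.subgroup.2.1
  have witness : ∀ w, Ω.IsVertex w → ∃ a, FΛ.G.src a = FΛ.i x ∧ act a v = w := by
    intro w hw
    obtain ⟨a, h1, h2⟩ := hact.act_trans hpc hΩconn w v hw hv
    exact ⟨a, by rw [h1, hpv], h2⟩
  have ract_eq : ∀ u, Ω.IsVertex u → ∀ c ∈ D.H, ∀ a, FΛ.G.src a = FΛ.i x →
      act a v = u → D.ract u c = act (FΛ.G.comp a c) v := by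
    intro u hu c hc a ha hav
    obtain ⟨h1, h2⟩ := D.ract_spec u c a hc ha (hav.trans hu.symm)
    have hvert : Ω.IsVertex (D.ract u c) :=
      hpc.vertex_of_p (by rw [h1]; exact hpc.p_vertex hu)
    exact hvert.symm.trans h2
  have ract_rng : ∀ lam c a0, c ∈ D.H → FΛ.G.src a0 = FΛ.i x → act a0 v = Ω.src lam →
      Ω.rng (D.ract lam c) = D.ract (Ω.rng lam) c := by
    intro lam c a0 hc ha01 ha02
    have ha0v : FΛ.G.src a0 = FΛ.i (p v) := by rw [ha01, hpv]
    have hrng0 : FΛ.G.rng a0 = FΛ.i (p (Ω.src lam)) := by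
      rw [← (hact.act_vertex a0 v hv ha0v).2, ha02]
    have gg : FΛ.G.src (FΛ.i (p lam)) = FΛ.G.rng a0 := by
      rw [← FΛ.i_hom.1, ← hpc.hom.1 lam, hrng0]
    have hcc := hHiso c hc
    have g2 : FΛ.G.src a0 = FΛ.G.rng c := by rw [ha01, hcc.2]
    have hsc : FΛ.G.src (FΛ.G.comp a0 c) = FΛ.i (p v) := by
      rw [FΛ.G.src_comp _ _ g2, hcc.1, hpv]
    have g3 : FΛ.G.src (FΛ.i (p lam)) = FΛ.G.rng (FΛ.G.comp a0 c) := by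
      rw [FΛ.G.rng_comp _ _ g2]; exact gg
    obtain ⟨h1, h2⟩ := D.ract_spec lam c a0 hc ha01 ha02
    have a1s : FΛ.G.src (FΛ.G.comp (FΛ.i (p lam)) a0) = FΛ.i x := by
      rw [FΛ.G.src_comp _ _ gg, ha01]
    have a1v : act (FΛ.G.comp (FΛ.i (p lam)) a0) v = Ω.rng lam := by
      rw [hact.act_comp _ _ v hv ha0v gg, ha02]
      exact hact.act_cov lam
    have e1 : Ω.rng (D.ract lam c) = act (FΛ.G.comp (FΛ.i (p lam)) (FΛ.G.comp a0 c)) v := by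
      rw [← hact.act_cov (D.ract lam c), h1, h2,
        ← hact.act_comp (FΛ.i (p lam)) (FΛ.G.comp a0 c) v hv hsc g3]
    have e2 : FΛ.G.comp (FΛ.i (p lam)) (FΛ.G.comp a0 c)
        = FΛ.G.comp (FΛ.G.comp (FΛ.i (p lam)) a0) c := (FΛ.G.assoc _ _ _ gg g2).symm
    rw [e1, e2]
    exact (ract_eq (Ω.rng lam) (Ω.isVertex_rng lam) c hc _ a1s a1v).symm
  have part1 : ∀ w c, Ω.IsVertex w → c ∈ D.H → D.ract w c = w → c = FΛ.i x := by
    intro w c hw hc hrw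
    obtain ⟨a, ha1, ha2⟩ := witness w hw
    have hcc := hHiso c hc
    have key := ract_eq w hw c hc a ha1 ha2
    rw [hrw] at key
    have g1 : FΛ.G.src a = FΛ.G.rng c := by rw [ha1, hcc.2]
    have hca : FΛ.G.comp a c = a := act_witness_unique hp hx hact v hv hpv
      (by rw [FΛ.G.src_comp _ _ g1, hcc.1]) ha1 (by rw [← key, ha2])
    calc c = FΛ.G.comp (FΛ.G.inv a) (FΛ.G.comp a c) := (FΛ.G.comp_inv_comp g1).symm
      _ = FΛ.G.comp (FΛ.G.inv a) a := by rw [hca]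
      _ = FΛ.G.src a := FΛ.G.inv_comp_self a
      _ = FΛ.i x := ha1
  have hq_vertex : ∀ w, Ω.IsVertex w → D.Q.IsVertex (D.qmap w) := by
    intro w hw
    show D.Q.src (D.qmap w) = D.qmap w
    rw [← D.qmap_hom.1, hw]
  have hQvert : ∀ V, D.Q.IsVertex V → ∃ w, Ω.IsVertex w ∧ D.qmap w = V := by
    intro V hV
    obtain ⟨u, hu⟩ := D.qmap_surj V
    exact ⟨Ω.src u, Ω.isVertex_src u, by rw [D.qmap_hom.1, hu, hV]⟩
  have part2 : IsCovering D.Q Λ D.qbar := by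
    constructor
    · exact D.qbar_hom
    · intro g
      obtain ⟨e, he⟩ := hpc.surj g
      exact ⟨D.qmap e, by rw [D.qbar_comm, he]⟩
    · -- src_inj
      intro α β h1 h2
      obtain ⟨a, rfl⟩ := D.qmap_surj α
      obtain ⟨b, rfl⟩ := D.qmap_surj β
      rw [← D.qmap_hom.1, ← D.qmap_hom.1] at h1
      obtain ⟨c, hc, hrc⟩ := (D.qmap_fib _ _).1 h1
      rw [D.qbar_comm, D.qbar_comm] at h2
      obtain ⟨a0, ha01, ha02⟩ := witness (Ω.src a) (Ω.isVertex_src a)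
      have key1 := ract_eq (Ω.src a) (Ω.isVertex_src a) c hc a0 ha01 ha02
      obtain ⟨hp1, hp2⟩ := D.ract_spec a c a0 hc ha01 ha02
      have hab : D.ract a c = b := by
        refine hpc.src_inj _ _ ?_ ?_
        · rw [hp2, ← key1, hrc]
        · rw [hp1, h2]
      exact (D.qmap_fib a b).2 ⟨c, hc, hab⟩
    · -- src_lift
      intro V hV g hg
      obtain ⟨w, hw, hqw⟩ := hQvert V hV
      have hg' : Λ.src g = p w := by rw [hg, ← hqw, D.qbar_comm]
      obtain ⟨e, he1, he2⟩ := hpc.src_lift w hw g hg'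
      exact ⟨D.qmap e, by rw [← D.qmap_hom.1, he1, hqw], by rw [D.qbar_comm, he2]⟩
    · -- rng_inj
      intro α β h1 h2
      obtain ⟨a, rfl⟩ := D.qmap_surj α
      obtain ⟨b, rfl⟩ := D.qmap_surj β
      rw [← D.qmap_hom.2.1, ← D.qmap_hom.2.1] at h1
      obtain ⟨c, hc, hrc⟩ := (D.qmap_fib _ _).1 h1
      rw [D.qbar_comm, D.qbar_comm] at h2
      obtain ⟨a0, ha01, ha02⟩ := witness (Ω.src a) (Ω.isVertex_src a)
      obtain ⟨hp1, hp2⟩ := D.ract_spec a c a0 hc ha01 ha02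
      have hab : D.ract a c = b := by
        refine hpc.rng_inj _ _ ?_ ?_
        · rw [ract_rng a c a0 hc ha01 ha02, hrc]
        · rw [hp1, h2]
      exact (D.qmap_fib a b).2 ⟨c, hc, hab⟩
    · -- rng_lift
      intro V hV g hg
      obtain ⟨w, hw, hqw⟩ := hQvert V hV
      have hg' : Λ.rng g = p w := by rw [hg, ← hqw, D.qbar_comm]
      obtain ⟨e, he1, he2⟩ := hpc.rng_lift w hw g hg'
      exact ⟨D.qmap e, by rw [← D.qmap_hom.2.1, he1, hqw], by rw [D.qbar_comm, he2]⟩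
  have part3 : D.Q.Connected := connected_of_surj_hom D.qmap_hom D.qmap_surj hΩconn
  have hix_s : FΛ.G.src (FΛ.i x) = FΛ.i x := FΛ.src_i_vertex hx
  have hix_act : act (FΛ.i x) v = v := by rw [← hpv]; exact hact.act_id v hv
  have hcv : ∀ c ∈ D.H, D.ract v c = act c v := by
    intro c hc
    rw [ract_eq v hv c hc (FΛ.i x) hix_s hix_act, FΛ.G.comp_id_left (hHiso c hc).2]
  refine ⟨part1, part2, part3, ?_, ?_⟩
  · -- part 4 : H = qst '' pi1
    intro FQ qst hqst hqc
    have hqbv : D.qbar (D.qmap v) = x := by rw [D.qbar_comm, hpv]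
    have hsrc_qst : ∀ b w, Ω.IsVertex w → FQ.G.src b = FQ.i (D.qmap w) →
        FΛ.G.src (qst b) = FΛ.i (p w) := by
      intro b w hw h
      rw [← hqst.1, h, hqc, D.qbar_comm]
    set PD : FQ.B → Prop := fun b => ∀ w, Ω.IsVertex w → FQ.G.src b = FQ.i (D.qmap w) →
      Ω.IsVertex (act (qst b) w) ∧ FQ.G.rng b = FQ.i (D.qmap (act (qst b) w)) with hPD
    have comp_case : ∀ b1 b2, FQ.G.src b1 = FQ.G.rng b2 → PD b1 → PD b2 →
        PD (FQ.G.comp b1 b2) := by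
      intro b1 b2 hgd P1 P2 w hw hsrc
      have hs2 : FQ.G.src b2 = FQ.i (D.qmap w) := by rw [← FQ.G.src_comp _ _ hgd, hsrc]
      obtain ⟨hw2, hr2⟩ := P2 w hw hs2
      obtain ⟨hw1, hr1⟩ := P1 (act (qst b2) w) hw2 (by rw [hgd, hr2])
      have hq2 : FΛ.G.src (qst b2) = FΛ.i (p w) := hsrc_qst b2 w hw hs2
      have hq12 : FΛ.G.src (qst b1) = FΛ.G.rng (qst b2) := by
        rw [← hqst.1, ← hqst.2.1, hgd]
      have heq : act (qst (FQ.G.comp b1 b2)) w = act (qst b1) (act (qst b2) w) := by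
        rw [hqst.2.2 _ _ hgd, hact.act_comp _ _ w hw hq2 hq12]
      refine ⟨by rw [heq]; exact hw1, ?_⟩
      rw [heq, FQ.G.rng_comp _ _ hgd, hr1]
    have claimD : ∀ b, FQ.Gen b → PD b ∧ PD (FQ.G.inv b) := by
      intro b hb
      induction hb with
      | base α =>
        constructor
        · intro w hw hsrc
          have hQsrc : D.Q.src α = D.qmap w := FQ.i_inj (D.Q.isVertex_src α)
            (hq_vertex w hw) (by rw [FQ.i_hom.1, hsrc])
          have hsrcα : Λ.src (D.qbar α) = p w := by
            rw [← D.qbar_hom.1, hQsrc, D.qbar_comm]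
          obtain ⟨e, he1, he2⟩ := hpc.src_lift w hw (D.qbar α) hsrcα
          have heqm : D.qmap e = α := part2.src_inj (D.qmap e) α
            (by rw [← D.qmap_hom.1, he1, hQsrc]) (by rw [D.qbar_comm, he2])
          have hActEq : act (qst (FQ.i α)) w = Ω.rng e := by
            rw [hqc, ← he2, ← he1]; exact hact.act_cov e
          refine ⟨by rw [hActEq]; exact Ω.isVertex_rng e, ?_⟩
          rw [hActEq, ← FQ.i_hom.2.1, ← heqm, ← D.qmap_hom.2.1]
        · intro w hw hsrc
          have hQrng : D.Q.rng α = D.qmap w := FQ.i_inj (D.Q.isVertex_rng α)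
            (hq_vertex w hw) (by rw [FQ.i_hom.2.1, ← FQ.G.src_inv, hsrc])
          have hrngα : Λ.rng (D.qbar α) = p w := by
            rw [← D.qbar_hom.2.1, hQrng, D.qbar_comm]
          obtain ⟨e, he1, he2⟩ := hpc.rng_lift w hw (D.qbar α) hrngα
          have heqm : D.qmap e = α := part2.rng_inj (D.qmap e) α
            (by rw [← D.qmap_hom.2.1, he1, hQrng]) (by rw [D.qbar_comm, he2])
          have hsrce : FΛ.G.src (FΛ.i (p e)) = FΛ.i (p (Ω.src e)) := by
            rw [← FΛ.i_hom.1, ← hpc.hom.1]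
          have hActEq : act (qst (FQ.G.inv (FQ.i α))) w = Ω.src e := by
            rw [hqst.map_inv, hqc, ← he2, ← he1, ← hact.act_cov e]
            exact hact.act_inv_left (Ω.isVertex_src e) hsrce
          refine ⟨by rw [hActEq]; exact Ω.isVertex_src e, ?_⟩
          rw [hActEq, FQ.G.rng_inv, ← FQ.i_hom.1, ← heqm, ← D.qmap_hom.1]
      | @ginv b hb ih =>
        refine ⟨ih.2, ?_⟩
        rw [FQ.G.inv_inv b]
        exact ih.1
      | @gcomp b b' hb hb' hgd ih ih' =>
        refine ⟨comp_case _ _ hgd ih.1 ih'.1, ?_⟩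
        rw [FQ.G.inv_comp hgd]
        exact comp_case _ _ (by rw [FQ.G.src_inv, FQ.G.rng_inv, hgd]) ih'.2 ih.2
    have claimE : ∀ c, FΛ.Gen c → ∀ w, Ω.IsVertex w → FΛ.G.src c = FΛ.i (p w) →
        ∃ b0, qst b0 = c ∧ FQ.G.src b0 = FQ.i (D.qmap w) ∧
          FQ.G.rng b0 = FQ.i (D.qmap (act c w)) := by
      intro c hc
      induction hc with
      | base lam =>
        intro w hw hsrc
        have hps : Λ.src lam = p w :=
          FΛ.i_inj (Λ.isVertex_src lam) (hpc.p_vertex hw) (by rw [FΛ.i_hom.1, hsrc])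
        obtain ⟨e, he1, he2⟩ := hpc.src_lift w hw lam (by rw [hps])
        refine ⟨FQ.i (D.qmap e), ?_, ?_, ?_⟩
        · rw [hqc, D.qbar_comm, he2]
        · rw [← FQ.i_hom.1, ← D.qmap_hom.1, he1]
        · have hActEq : act (FΛ.i lam) w = Ω.rng e := by
            rw [← he2, ← he1]; exact hact.act_cov e
          rw [hActEq, ← FQ.i_hom.2.1, ← D.qmap_hom.2.1]
      | @ginv c' hc' ih =>
        intro w hw hsrc
        have hrc' : FΛ.G.rng c' = FΛ.i (p w) := by rw [← FΛ.G.src_inv, hsrc]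
        have hw' : Ω.IsVertex (act (FΛ.G.inv c') w) := (hact.act_vertex _ w hw hsrc).1
        have hfw' : FΛ.i (p (act (FΛ.G.inv c') w)) = FΛ.G.rng (FΛ.G.inv c') :=
          (hact.act_vertex _ w hw hsrc).2
        have hsc' : FΛ.G.src c' = FΛ.i (p (act (FΛ.G.inv c') w)) := by
          rw [hfw', FΛ.G.rng_inv]
        obtain ⟨b0', hb1, hb2, hb3⟩ := ih (act (FΛ.G.inv c') w) hw' hsc'
        have hback : act c' (act (FΛ.G.inv c') w) = w := hact.act_inv_right hw hrc'
        rw [hback] at hb3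
        refine ⟨FQ.G.inv b0', ?_, ?_, ?_⟩
        · rw [hqst.map_inv, hb1]
        · rw [FQ.G.src_inv, hb3]
        · rw [FQ.G.rng_inv, hb2]
      | @gcomp c1 c2 hc1 hc2 hgd ih ih' =>
        intro w hw hsrc
        have hs2 : FΛ.G.src c2 = FΛ.i (p w) := by rw [← FΛ.G.src_comp _ _ hgd, hsrc]
        have hw2 : Ω.IsVertex (act c2 w) := (hact.act_vertex c2 w hw hs2).1
        have hs1 : FΛ.G.src c1 = FΛ.i (p (act c2 w)) := by
          rw [hgd, (hact.act_vertex c2 w hw hs2).2]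
        obtain ⟨b2, hb21, hb22, hb23⟩ := ih' w hw hs2
        obtain ⟨b1, hb11, hb12, hb13⟩ := ih (act c2 w) hw2 hs1
        have hbg : FQ.G.src b1 = FQ.G.rng b2 := by rw [hb12, hb23]
        refine ⟨FQ.G.comp b1 b2, ?_, ?_, ?_⟩
        · rw [hqst.2.2 _ _ hbg, hb11, hb21]
        · rw [FQ.G.src_comp _ _ hbg, hb22]
        · rw [FQ.G.rng_comp _ _ hbg, hb13, hact.act_comp c1 c2 w hw hs2 hgd]
    ext c
    constructor
    · -- H ⊆ qst '' pi1
      intro hc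
      have hcs : FΛ.G.src c = FΛ.i (p v) := by rw [(hHiso c hc).1, hpv]
      obtain ⟨b0, hb1, hb2, hb3⟩ := claimE c (FΛ.gen_all c) v hv hcs
      have hqq : D.qmap v = D.qmap (D.ract v c) := (D.qmap_fib v (D.ract v c)).2 ⟨c, hc, rfl⟩
      rw [← hcv c hc, ← hqq] at hb3
      exact ⟨b0, ⟨hb2, hb3⟩, hb1⟩
    · -- qst '' pi1 ⊆ H
      rintro ⟨b0, ⟨hb1, hb2⟩, rfl⟩
      obtain ⟨hwv, hrv⟩ := (claimD b0 (FQ.gen_all b0)).1 v hv hb1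
      have hqq : D.qmap v = D.qmap (act (qst b0) v) :=
        FQ.i_inj (hq_vertex v hv) (hq_vertex _ hwv) (by rw [← hb2, hrv])
      obtain ⟨c, hc, hrc⟩ := (D.qmap_fib _ _).1 hqq
      rw [hcv c hc] at hrc
      have hcs : FΛ.G.src c = FΛ.i x := (hHiso c hc).1
      have hbs : FΛ.G.src (qst b0) = FΛ.i x := by rw [← hqst.1, hb1, hqc, hqbv]
      have : c = qst b0 := act_witness_unique hp hx hact v hv hpv hcs hbs hrc
      rw [← this]
      exact hc
  · -- part 5 : classification
    intro A'' Sg r hr hrconn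
    obtain ⟨φ, hφ, hφp⟩ := hp.2.2 A'' Sg r hr hrconn
    have hφvert : ∀ w, Ω.IsVertex w → Sg.IsVertex (φ w) := by
      intro w hw
      show Sg.src (φ w) = φ w
      rw [← hφ.1, hw]
    set H' : Set FΛ.B :=
      {c | FΛ.G.src c = FΛ.i x ∧ FΛ.G.rng c = FΛ.i x ∧ φ (act c v) = φ v} with hH'
    have hmem : ∀ c, c ∈ H' ↔
        (FΛ.G.src c = FΛ.i x ∧ FΛ.G.rng c = FΛ.i x ∧ φ (act c v) = φ v) :=
      fun c => Iff.rfl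
    have hφact : ∀ c, c ∈ H' → ∀ a, FΛ.G.src a = FΛ.i x →
        φ (act a (act c v)) = φ (act a v) := by
      intro c hc a ha
      obtain ⟨hc1, hc2, hc3⟩ := (hmem c).1 hc
      have hcpv : FΛ.G.src c = FΛ.i (p v) := by rw [hc1, hpv]
      have hcv2 : Ω.IsVertex (act c v) := (hact.act_vertex c v hv hcpv).1
      have hs1 : FΛ.G.src a = FΛ.i (p (act c v)) := by
        rw [(hact.act_vertex c v hv hcpv).2, ha, hc2]
      have hs2 : FΛ.G.src a = FΛ.i (p v) := by rw [ha, hpv]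
      exact (claimF hpc hact hr φ hφ hφp a (act c v) v hcv2 hv hs1 hs2).1 hc3
    have hsub : FΛ.G.IsSubgroupAt (FΛ.i x) H' := by
      refine ⟨fun c hc => ⟨((hmem c).1 hc).1, ((hmem c).1 hc).2.1⟩,
        (hmem _).2 ⟨hix_s, FΛ.rng_i_vertex hx, by rw [hix_act]⟩, ?_, ?_⟩
      · intro c hc c' hc'
        obtain ⟨hc1, hc2, hc3⟩ := (hmem c).1 hc
        obtain ⟨hc1', hc2', hc3'⟩ := (hmem c').1 hc'
        have g : FΛ.G.src c = FΛ.G.rng c' := by rw [hc1, hc2']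
        refine (hmem _).2 ⟨by rw [FΛ.G.src_comp _ _ g, hc1'],
          by rw [FΛ.G.rng_comp _ _ g, hc2], ?_⟩
        rw [hact.act_comp c c' v hv (by rw [hc1', hpv]) g, hφact c' hc' c hc1, hc3]
      · intro c hc
        obtain ⟨hc1, hc2, hc3⟩ := (hmem c).1 hc
        refine (hmem _).2 ⟨by rw [FΛ.G.src_inv, hc2], by rw [FΛ.G.rng_inv, hc1], ?_⟩
        have hinvs : FΛ.G.src (FΛ.G.inv c) = FΛ.i (p v) := by
          rw [FΛ.G.src_inv, hc2, hpv]
        have hcinv : Ω.IsVertex (act (FΛ.G.inv c) v) :=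
          (hact.act_vertex _ v hv hinvs).1
        have hs1 : FΛ.G.src c = FΛ.i (p (act (FΛ.G.inv c) v)) := by
          rw [(hact.act_vertex _ v hv hinvs).2, FΛ.G.rng_inv]
        have hs2 : FΛ.G.src c = FΛ.i (p v) := by rw [hc1, hpv]
        have hiff := claimF hpc hact hr φ hφ hφp c (act (FΛ.G.inv c) v) v hcinv hv hs1 hs2
        have hback : act c (act (FΛ.G.inv c) v) = v :=
          hact.act_inv_right hv (by rw [hc2, hpv])
        rw [hback] at hiff
        exact hiff.2 hc3.symm
    have vert_surj : ∀ s, Sg.IsVertex s → ∃ w, Ω.IsVertex w ∧ φ w = s := by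
      have key : ∀ s s', Relation.EqvGen (fun a b => ∃ g, Sg.rng g = a ∧ Sg.src g = b) s s' →
          ((∃ w, Ω.IsVertex w ∧ φ w = s) ↔ (∃ w, Ω.IsVertex w ∧ φ w = s')) := by
        intro s s' h
        induction h with
        | rel s s' hss =>
          obtain ⟨g, h1, h2⟩ := hss
          subst h1; subst h2
          constructor
          · rintro ⟨w, hw, hfw⟩
            have hrg : Λ.rng (r g) = p w := by rw [← hr.hom.2.1, ← hfw, hφp]
            obtain ⟨e, he1, he2⟩ := hpc.rng_lift w hw (r g) hrg
            have hfe : φ e = g := by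
              refine hr.rng_inj _ _ ?_ ?_
              · rw [← hφ.2.1, he1, hfw]
              · rw [hφp, he2]
            exact ⟨Ω.src e, Ω.isVertex_src e, by rw [hφ.1, hfe]⟩
          · rintro ⟨w, hw, hfw⟩
            have hsg : Λ.src (r g) = p w := by rw [← hr.hom.1, ← hfw, hφp]
            obtain ⟨e, he1, he2⟩ := hpc.src_lift w hw (r g) hsg
            have hfe : φ e = g := by
              refine hr.src_inj _ _ ?_ ?_
              · rw [← hφ.1, he1, hfw]
              · rw [hφp, he2]
            exact ⟨Ω.rng e, Ω.isVertex_rng e, by rw [hφ.2.1, hfe]⟩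
        | refl s => exact Iff.rfl
        | symm s s' _ ih => exact ih.symm
        | trans s t u _ _ ih1 ih2 => exact ih1.trans ih2
      intro s hs
      exact (key (φ v) s (hrconn (φ v) s (hφvert v hv) hs)).1 ⟨v, hv, rfl⟩
    have hφsurj : Function.Surjective φ := by
      intro g
      obtain ⟨w, hw, hfw⟩ := vert_surj (Sg.src g) (Sg.isVertex_src g)
      have hsg : Λ.src (r g) = p w := by rw [← hr.hom.1, ← hfw, hφp]
      obtain ⟨e, he1, he2⟩ := hpc.src_lift w hw (r g) hsg
      refine ⟨e, ?_⟩
      refine hr.src_inj _ _ ?_ ?_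
      · rw [← hφ.1, he1, hfw]
      · rw [hφp, he2]
    have hfib : ∀ a b, φ a = φ b ↔ ∃ c ∈ H', ractC hp.1 hact v hv hpv a c = b := by
      intro a b
      constructor
      · intro hab
        have hpab : p a = p b := by rw [← hφp a, ← hφp b, hab]
        have hsab : φ (Ω.src a) = φ (Ω.src b) := by rw [hφ.1, hφ.1, hab]
        obtain ⟨a0, ha01, ha02⟩ := witness (Ω.src a) (Ω.isVertex_src a)
        obtain ⟨a1, ha11, ha12⟩ := witness (Ω.src b) (Ω.isVertex_src b)
        have ha0pv : FΛ.G.src a0 = FΛ.i (p v) := by rw [ha01, hpv]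
        have ha1pv : FΛ.G.src a1 = FΛ.i (p v) := by rw [ha11, hpv]
        have hr0 : FΛ.G.rng a0 = FΛ.i (p (Ω.src a)) := by
          rw [← (hact.act_vertex a0 v hv ha0pv).2, ha02]
        have hr1 : FΛ.G.rng a1 = FΛ.i (p (Ω.src b)) := by
          rw [← (hact.act_vertex a1 v hv ha1pv).2, ha12]
        have hpss : p (Ω.src a) = p (Ω.src b) := by rw [hpc.hom.1, hpc.hom.1, hpab]
        have hr01 : FΛ.G.rng a0 = FΛ.G.rng a1 := by rw [hr0, hr1, hpss]
        have ginv0 : FΛ.G.src (FΛ.G.inv a0) = FΛ.G.rng a1 := by rw [FΛ.G.src_inv, hr01]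
        have hcs : FΛ.G.src (FΛ.G.comp (FΛ.G.inv a0) a1) = FΛ.i x := by
          rw [FΛ.G.src_comp _ _ ginv0, ha11]
        have hcr : FΛ.G.rng (FΛ.G.comp (FΛ.G.inv a0) a1) = FΛ.i x := by
          rw [FΛ.G.rng_comp _ _ ginv0, FΛ.G.rng_inv, ha01]
        have hactc : act (FΛ.G.comp (FΛ.G.inv a0) a1) v = act (FΛ.G.inv a0) (Ω.src b) := by
          rw [hact.act_comp _ _ v hv ha1pv ginv0, ha12]
        have hflip : φ (act (FΛ.G.inv a0) (Ω.src b)) = φ v := by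
          have hiff := claimF hpc hact hr φ hφ hφp (FΛ.G.inv a0) (Ω.src b) (Ω.src a)
            (Ω.isVertex_src b) (Ω.isVertex_src a)
            (by rw [FΛ.G.src_inv, hr01, hr1]) (by rw [FΛ.G.src_inv, hr0])
          have h1 := hiff.1 hsab.symm
          rw [← ha02, hact.act_inv_left hv ha0pv] at h1
          exact h1
        have hcH : FΛ.G.comp (FΛ.G.inv a0) a1 ∈ H' :=
          (hmem _).2 ⟨hcs, hcr, by rw [hactc, hflip]⟩
        refine ⟨_, hcH, ?_⟩
        obtain ⟨hp1, hp2⟩ := ractC_spec hp hx hact v hv hpv a _ a0 hcs hcr ha01 ha02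
        have hcomp : FΛ.G.comp a0 (FΛ.G.comp (FΛ.G.inv a0) a1) = a1 :=
          FΛ.G.comp_comp_inv hr01
        refine hpc.src_inj _ _ ?_ ?_
        · rw [hp2, hcomp, ha12]
        · rw [hp1, hpab]
      · rintro ⟨c, hc, hrc⟩
        obtain ⟨hc1, hc2, hc3⟩ := (hmem c).1 hc
        obtain ⟨a0, ha01, ha02⟩ := witness (Ω.src a) (Ω.isVertex_src a)
        obtain ⟨hp1, hp2⟩ := ractC_spec hp hx hact v hv hpv a c a0 hc1 hc2 ha01 ha02
        have hfr : φ (ractC hp.1 hact v hv hpv a c) = φ a := by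
          refine hr.src_inj _ _ ?_ ?_
          · rw [← hφ.1, ← hφ.1, hp2,
              hact.act_comp a0 c v hv (by rw [hc1, hpv]) (by rw [ha01, hc2]),
              hφact c hc a0 ha01, ha02]
          · rw [hφp, hφp, hp1]
        rw [← hrc, hfr]
    refine ⟨⟨H', hsub, ractC hp.1 hact v hv hpv,
      fun lam c a hc ha hav =>
        ractC_spec hp hx hact v hv hpv lam c a ((hmem c).1 hc).1 ((hmem c).1 hc).2.1 ha hav,
      A'', Sg, φ, hφ, hφsurj, hfib, r, hr.hom, hφp⟩, id, Function.bijective_id,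
      ⟨fun _ => rfl, fun _ => rfl, fun _ _ _ => rfl, fun _ => rfl⟩, fun a => rfl⟩

end KGraphCovering
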